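/- arXiv:2304.01803 — 7 statements merged into one kernel-verified Lean document; each statement's English description precedes it below -/
import Mathlib

section
/- Let μ be a doubling measure on a metric space X and x ∈ X. Then X is uniformly perfect at x if and only if μ is reverse-doubling at x, i.e. there exist constants C, κ̂ > 1 such that μ(B(x, κ̂ r)) ≥ C μ(B(x,r)) for all 0 < r < diam X / (2κ̂). -/
open MeasureTheory Metric Set ENNReal

open Classical in

/-- Pointwise Besov energy `∫_Y |u(x)-u(y)|^p / d(x,y)^{θp} · dν(y)/ν(B(x,d(x,y)))`. -/
noncomputable def besovPointEnergy {Y : Type*} [MetricSpace Y] [MeasurableSpace Y]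
    (ν : Measure Y) (θ p : ℝ) (u : Y → ℝ) (x : Y) : ℝ≥0∞ :=
  ∫⁻ y, (if x = y then 0 else
    ENNReal.ofReal (|u x - u y| ^ p) /
      (ENNReal.ofReal (dist x y ^ (θ * p)) * ν (ball x (dist x y)))) ∂ν

/-- The Besov seminorm to the power `p`:
`[u]_{θ,p}^p = ∫_Y ∫_Y |u(x)-u(y)|^p / d(x,y)^{θp} · dν(y) dν(x)/ν(B(x,d(x,y)))`. -/
noncomputable def besovEnergy {Y : Type*} [MetricSpace Y] [MeasurableSpace Y]
    (ν : Measure Y) (θ p : ℝ) (u : Y → ℝ) : ℝ≥0∞ :=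
  ∫⁻ x, besovPointEnergy ν θ p u x ∂ν

/-- `u` is admissible for the Besov norm-capacity of `E`:
`0 ≤ u ≤ 1` everywhere and `u = 1` in a neighbourhood of `E`. -/
def normAdmissible {Y : Type*} [MetricSpace Y] (E : Set Y) (u : Y → ℝ) : Prop :=
  (∀ z, 0 ≤ u z ∧ u z ≤ 1) ∧ ∃ G : Set Y, IsOpen G ∧ E ⊆ G ∧ ∀ z ∈ G, u z = 1

/-- The Besov norm-capacity `C_{θ,p}(E) = inf (‖u‖_{L^p}^p + [u]_{θ,p}^p)` over admissible `u`. -/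
noncomputable def besovNormCap {Y : Type*} [MetricSpace Y] [MeasurableSpace Y]
    (ν : Measure Y) (θ p : ℝ) (E : Set Y) : ℝ≥0∞ :=
  ⨅ (u : Y → ℝ) (_ : normAdmissible E u),
    (∫⁻ x, ENNReal.ofReal (|u x| ^ p) ∂ν) + besovEnergy ν θ p u

/-- `u` is admissible for the Besov condenser capacity of `(E, Ω)`:
`0 ≤ u ≤ 1` everywhere, `u = 1` in a neighbourhood of `E`, and `supp u ⋐ Ω`. -/
def condAdmissible {Y : Type*} [MetricSpace Y] (E Ω : Set Y) (u : Y → ℝ) : Prop :=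
  (∀ z, 0 ≤ u z ∧ u z ≤ 1) ∧ (∃ G : Set Y, IsOpen G ∧ E ⊆ G ∧ ∀ z ∈ G, u z = 1) ∧
    IsCompact (tsupport u) ∧ tsupport u ⊆ Ω

/-- The Besov condenser capacity `cap_{θ,p}(E,Ω) = inf [u]_{θ,p}^p` over admissible `u`. -/
noncomputable def besovCondCap {Y : Type*} [MetricSpace Y] [MeasurableSpace Y]
    (ν : Measure Y) (θ p : ℝ) (E Ω : Set Y) : ℝ≥0∞ :=
  ⨅ (u : Y → ℝ) (_ : condAdmissible E Ω u), besovEnergy ν θ p u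

/-- `ν` is doubling with constant `C`. -/
def IsDoublingWith {Y : Type*} [MetricSpace Y] [MeasurableSpace Y]
    (ν : Measure Y) (C : ℝ) : Prop :=
  ∀ (x : Y) (r : ℝ), 0 < r → ν (ball x (2 * r)) ≤ ENNReal.ofReal C * ν (ball x r)

/-- `ν` is positive and finite on balls. -/
def BallsPosFinite {Y : Type*} [MetricSpace Y] [MeasurableSpace Y] (ν : Measure Y) : Prop :=
  ∀ (x : Y) (r : ℝ), 0 < r → 0 < ν (ball x r) ∧ ν (ball x r) < ∞

/-- `X` is uniformly perfect at `x` with constant `κ`. -/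
def UnifPerfectAt {Y : Type*} [MetricSpace Y] (x : Y) (κ : ℝ) : Prop :=
  ∀ r : ℝ, 0 < r → ball x (κ * r) ≠ univ → (ball x (κ * r) \ ball x r).Nonempty

theorem stmt1 {X : Type*} [MetricSpace X] [MeasurableSpace X] [BorelSpace X]
    (ν : Measure X) (x : X) (Cν : ℝ) (hC : 1 < Cν)
    (hdoub : IsDoublingWith ν Cν) (hballs : BallsPosFinite ν) :
    (∃ κ : ℝ, 1 < κ ∧ UnifPerfectAt x κ) ↔
      (∃ C κ : ℝ, 1 < C ∧ 1 < κ ∧ ∀ r : ℝ, 0 < r →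
        ENNReal.ofReal (2 * κ * r) < EMetric.diam (univ : Set X) →
        ENNReal.ofReal C * ν (ball x r) ≤ ν (ball x (κ * r))) := by
  have hC0 : (0:ℝ) < Cν := by linarith
  -- iterated doubling
  have hiter : ∀ (y : X) (m : ℕ) (r : ℝ), 0 < r →
      ν (ball y (2 ^ m * r)) ≤ (ENNReal.ofReal Cν) ^ m * ν (ball y r) := by
    intro y m
    induction m with
    | zero => intro r hr; simp
    | succ n ih =>
      intro r hr
      have h2 : (2:ℝ) ^ (n+1) * r = 2 * (2 ^ n * r) := by ring
      rw [h2]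
      calc ν (ball y (2 * (2 ^ n * r)))
          ≤ ENNReal.ofReal Cν * ν (ball y (2 ^ n * r)) := hdoub y _ (by positivity)
        _ ≤ ENNReal.ofReal Cν * ((ENNReal.ofReal Cν) ^ n * ν (ball y r)) :=
            mul_le_mul_right (ih r hr) _
        _ = (ENNReal.ofReal Cν) ^ (n+1) * ν (ball y r) := by ring
  constructor
  · rintro ⟨κ, hκ, hup⟩
    obtain ⟨m, hm⟩ : ∃ m : ℕ, 2 * κ + 1 ≤ 2 ^ m := by
      obtain ⟨m, hm⟩ := pow_unbounded_of_one_lt (2 * κ + 1) (one_lt_two (α := ℝ))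
      exact ⟨m, hm.le⟩
    have hcm : (0:ℝ) < Cν ^ m := pow_pos hC0 m
    refine ⟨1 + 1 / Cν ^ m, 2 * κ + 1, ?_, by linarith, ?_⟩
    · have : 0 < 1 / Cν ^ m := div_pos one_pos hcm
      linarith
    intro r hr hdiam
    -- there is a point outside ball x (2κr)
    have hne : ball x (κ * (2 * r)) ≠ univ := by
      intro hcontra
      have hle : EMetric.diam (univ : Set X) ≤ ENNReal.ofReal (2 * (2 * κ + 1) * r) := by
        apply EMetric.diam_le
        intro a _ b _
        have ha : a ∈ ball x (κ * (2 * r)) := hcontra ▸ mem_univ a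
        have hb : b ∈ ball x (κ * (2 * r)) := hcontra ▸ mem_univ b
        rw [mem_ball] at ha hb
        calc edist a b ≤ edist a x + edist x b := edist_triangle _ _ _
          _ ≤ ENNReal.ofReal (κ * (2 * r)) + ENNReal.ofReal (κ * (2 * r)) := by
              gcongr
              · rw [edist_dist]; exact ENNReal.ofReal_le_ofReal ha.le
              · rw [edist_dist, dist_comm]; exact ENNReal.ofReal_le_ofReal hb.le
          _ = ENNReal.ofReal (κ * (2 * r) + κ * (2 * r)) := by
              rw [ENNReal.ofReal_add (by positivity) (by positivity)]
          _ ≤ ENNReal.ofReal (2 * (2 * κ + 1) * r) :=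
              ENNReal.ofReal_le_ofReal (by nlinarith)
      exact absurd (lt_of_lt_of_le hdiam hle) (lt_irrefl _)
    obtain ⟨y, hy⟩ := hup (2 * r) (by positivity) hne
    rw [mem_diff, mem_ball, mem_ball, not_lt] at hy
    obtain ⟨hy1, hy2⟩ := hy
    -- subsets and disjointness
    have hsub1 : ball x r ⊆ ball y (2 ^ m * r) := by
      intro z hz
      rw [mem_ball] at hz ⊢
      calc dist z y ≤ dist z x + dist x y := dist_triangle _ _ _
        _ < r + κ * (2 * r) := by
            have hxy : dist x y < κ * (2 * r) := by rw [dist_comm]; exact hy1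
            exact add_lt_add hz hxy
        _ ≤ 2 ^ m * r := by nlinarith
    have hsub2 : ball y r ⊆ ball x ((2 * κ + 1) * r) := by
      intro z hz
      rw [mem_ball] at hz ⊢
      calc dist z x ≤ dist z y + dist y x := dist_triangle _ _ _
        _ < r + κ * (2 * r) := add_lt_add hz hy1
        _ ≤ (2 * κ + 1) * r := by nlinarith
    have hsub3 : ball x r ⊆ ball x ((2 * κ + 1) * r) :=
      ball_subset_ball (by nlinarith)
    have hdisj : Disjoint (ball x r) (ball y r) := by
      rw [Set.disjoint_left]
      intro z hz1 hz2
      rw [mem_ball] at hz1 hz2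
      have : dist y x ≤ dist y z + dist z x := dist_triangle _ _ _
      rw [dist_comm y z] at this
      linarith
    -- measure estimates
    have hab : ν (ball x r) ≤ (ENNReal.ofReal Cν) ^ m * ν (ball y r) :=
      le_trans (measure_mono hsub1) (hiter y m r hr)
    have hkey : ENNReal.ofReal (1 / Cν ^ m) * ν (ball x r) ≤ ν (ball y r) := by
      calc ENNReal.ofReal (1 / Cν ^ m) * ν (ball x r)
          ≤ ENNReal.ofReal (1 / Cν ^ m) * ((ENNReal.ofReal Cν) ^ m * ν (ball y r)) :=
            mul_le_mul_right hab _
        _ = (ENNReal.ofReal (1 / Cν ^ m) * ENNReal.ofReal (Cν ^ m)) * ν (ball y r) := by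
            rw [ENNReal.ofReal_pow hC0.le]; ring
        _ = ν (ball y r) := by
            rw [← ENNReal.ofReal_mul (by positivity), one_div,
              inv_mul_cancel₀ hcm.ne', ENNReal.ofReal_one, one_mul]
    calc ENNReal.ofReal (1 + 1 / Cν ^ m) * ν (ball x r)
        = (1 + ENNReal.ofReal (1 / Cν ^ m)) * ν (ball x r) := by
          rw [ENNReal.ofReal_add zero_le_one (by positivity), ENNReal.ofReal_one]
      _ = ν (ball x r) + ENNReal.ofReal (1 / Cν ^ m) * ν (ball x r) := by ring
      _ ≤ ν (ball x r) + ν (ball y r) := add_le_add_right hkey _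
      _ = ν (ball x r ∪ ball y r) := (measure_union hdisj measurableSet_ball).symm
      _ ≤ ν (ball x ((2 * κ + 1) * r)) :=
          measure_mono (union_subset hsub3 hsub2)
  · rintro ⟨C, κ, hC1, hκ1, hrev⟩
    set κ₂ : ℝ := κ + 2 with hκ₂
    have hκ₂2 : (2:ℝ) < κ₂ := by linarith
    refine ⟨κ₂ ^ 2, by nlinarith, ?_⟩
    intro r hr hne
    by_contra hempty
    rw [Set.not_nonempty_iff_eq_empty, diff_eq_empty] at hempty
    -- a point outside the big ball gives a lower bound on the diameter
    obtain ⟨y, hy⟩ : ∃ y, y ∉ ball x (κ₂ ^ 2 * r) := by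
      by_contra h
      push_neg at h
      exact hne (eq_univ_of_forall h)
    rw [mem_ball, not_lt] at hy
    have hdiam : ENNReal.ofReal (2 * κ * r) < EMetric.diam (univ : Set X) := by
      calc ENNReal.ofReal (2 * κ * r) < ENNReal.ofReal (κ₂ ^ 2 * r) := by
            rw [ENNReal.ofReal_lt_ofReal_iff (by positivity)]
            nlinarith [mul_pos (show (0:ℝ) < κ₂ ^ 2 - 2 * κ by nlinarith [sq_nonneg κ]) hr]
        _ ≤ edist y x := by rw [edist_dist]; exact ENNReal.ofReal_le_ofReal hy
        _ ≤ EMetric.diam (univ : Set X) :=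
            EMetric.edist_le_diam_of_mem (mem_univ _) (mem_univ _)
    -- extend reverse doubling from κ to κ₂
    have h1 : ENNReal.ofReal C * ν (ball x r) ≤ ν (ball x r) := by
      calc ENNReal.ofReal C * ν (ball x r) ≤ ν (ball x (κ * r)) := hrev r hr hdiam
        _ ≤ ν (ball x (κ₂ ^ 2 * r)) := by
            have hκle : κ ≤ κ₂ ^ 2 := by nlinarith [sq_nonneg κ]
            exact measure_mono (ball_subset_ball (mul_le_mul_of_nonneg_right hκle hr.le))
        _ ≤ ν (ball x r) := measure_mono hempty
    obtain ⟨hpos, hfin⟩ := hballs x r hr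
    have h2 : ENNReal.ofReal C ≤ 1 := by
      have h1' : ENNReal.ofReal C * ν (ball x r) ≤ 1 * ν (ball x r) := by
        rw [one_mul]; exact h1
      exact (ENNReal.mul_le_mul_iff_left hpos.ne' hfin.ne).mp h1'
    have : (1:ℝ≥0∞) < ENNReal.ofReal C := by
      rw [← ENNReal.ofReal_one, ENNReal.ofReal_lt_ofReal_iff (by linarith)]
      exact hC1
    exact absurd h2 this.not_ge
end

section
/- Let ν be a doubling measure on a complete metric space Y, 0 < θ < 1, 1 ≤ p < ∞, and let η: Y → [0,1] be an M-Lipschitz function. Then for every x ∈ Y, the integral I(x) = ∫_Y |η(x)-η(y)|^p / d(x,y)^{θp} · dν(y)/ν(B(x,d(x,y))) satisfies I(x) ≤ C M^{θp}, where C depends only on θ, p and the doubling constant of ν. -/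
open MeasureTheory Metric Set ENNReal

noncomputable def gAux (p q : ℝ) (k : ℤ) : ℝ :=
  (min 1 ((2:ℝ) ^ (k+1))) ^ p * ((2:ℝ) ^ k) ^ (-q)

lemma gAux_nonneg (p q : ℝ) (k : ℤ) : 0 ≤ gAux p q k := by
  unfold gAux; positivity

lemma two_zpow_rpow (k : ℤ) (a : ℝ) : ((2:ℝ) ^ k) ^ a = (2:ℝ) ^ ((k : ℝ) * a) := by
  rw [← Real.rpow_intCast 2 k, ← Real.rpow_mul (by norm_num)]

lemma rpow_nat_geom (c : ℝ) (n : ℕ) : (2:ℝ) ^ ((n:ℝ) * c) = ((2:ℝ) ^ c) ^ n := by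
  rw [mul_comm, Real.rpow_mul (by norm_num), Real.rpow_natCast]

lemma gAux_summable {p q : ℝ} (hp : 0 < p) (hq : 0 < q) (hqp : q < p) :
    Summable (gAux p q) := by
  apply Summable.of_nat_of_neg
  · refine Summable.of_nonneg_of_le (g := fun n : ℕ => gAux p q n)
      (f := fun n : ℕ => ((2:ℝ) ^ (-q)) ^ n) (fun n => gAux_nonneg p q n) (fun n => ?_)
      (summable_geometric_of_lt_one (by positivity)
        (Real.rpow_lt_one_of_one_lt_of_neg (by norm_num) (by linarith)))
    unfold gAux
    have h1 : (min 1 ((2:ℝ) ^ ((n:ℤ)+1))) ^ p ≤ 1 :=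
      Real.rpow_le_one (by positivity) (min_le_left _ _) hp.le
    have h2 : ((2:ℝ) ^ ((n:ℤ))) ^ (-q) = ((2:ℝ) ^ (-q)) ^ n := by
      rw [two_zpow_rpow]; push_cast; exact rpow_nat_geom (-q) n
    calc (min 1 ((2:ℝ) ^ ((n:ℤ)+1))) ^ p * ((2:ℝ) ^ (n:ℤ)) ^ (-q)
        ≤ 1 * ((2:ℝ) ^ (n:ℤ)) ^ (-q) :=
          mul_le_mul_of_nonneg_right h1 (by positivity)
      _ = ((2:ℝ) ^ (-q)) ^ n := by rw [one_mul, h2]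
  · refine Summable.of_nonneg_of_le (g := fun n : ℕ => gAux p q (-n))
      (f := fun n : ℕ => (2:ℝ) ^ p * ((2:ℝ) ^ (q - p)) ^ n) (fun n => gAux_nonneg p q _) (fun n => ?_)
      ((summable_geometric_of_lt_one (by positivity)
        (Real.rpow_lt_one_of_one_lt_of_neg (by norm_num) (by linarith))).mul_left ((2:ℝ) ^ p))
    unfold gAux
    have h1 : (min 1 ((2:ℝ) ^ ((-n:ℤ)+1))) ^ p ≤ ((2:ℝ) ^ ((-n:ℤ)+1)) ^ p :=
      Real.rpow_le_rpow (by positivity) (min_le_right _ _) hp.le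
    calc (min 1 ((2:ℝ) ^ ((-n:ℤ)+1))) ^ p * ((2:ℝ) ^ (-n:ℤ)) ^ (-q)
        ≤ ((2:ℝ) ^ ((-n:ℤ)+1)) ^ p * ((2:ℝ) ^ (-n:ℤ)) ^ (-q) :=
          mul_le_mul_of_nonneg_right h1 (by positivity)
      _ = (2:ℝ) ^ p * ((2:ℝ) ^ (q - p)) ^ n := by
          rw [two_zpow_rpow, two_zpow_rpow, ← Real.rpow_add (by norm_num),
            ← rpow_nat_geom, ← Real.rpow_add (by norm_num)]
          congr 1
          push_cast
          ring

lemma ennreal_cancel (a b B c : ℝ≥0∞) (hb0 : b ≠ 0) (hb : b ≠ ∞)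
    (hB0 : B ≠ 0) (hB : B ≠ ∞) : a / (b * B) * (c * B) = c * (a / b) := by
  rw [div_eq_mul_inv, ENNReal.mul_inv (Or.inl hb0) (Or.inl hb), div_eq_mul_inv]
  calc a * (b⁻¹ * B⁻¹) * (c * B) = c * (a * b⁻¹) * (B⁻¹ * B) := by ring
    _ = c * (a * b⁻¹) := by rw [ENNReal.inv_mul_cancel hB0 hB, mul_one]

universe u

theorem stmt6 (θ p Cν : ℝ) (hθ0 : 0 < θ) (hθ1 : θ < 1) (hp : 1 ≤ p) (hC : 1 < Cν) :
    ∃ C : ℝ, 0 < C ∧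
      ∀ (Y : Type u) [MetricSpace Y] [MeasurableSpace Y] [BorelSpace Y] [CompleteSpace Y]
        (ν : Measure Y), IsDoublingWith ν Cν → BallsPosFinite ν →
        ∀ (M : ℝ) (η : Y → ℝ), 0 ≤ M → (∀ z, 0 ≤ η z ∧ η z ≤ 1) →
          LipschitzWith (Real.toNNReal M) η →
          ∀ x : Y, besovPointEnergy ν θ p η x ≤ ENNReal.ofReal (C * M ^ (θ * p)) := by
  classical
  have hp0 : (0:ℝ) < p := lt_of_lt_of_le one_pos hp
  have hq0 : (0:ℝ) < θ * p := mul_pos hθ0 hp0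
  have hqp : θ * p < p := by nlinarith
  have hsum : Summable (gAux p (θ * p)) := gAux_summable hp0 hq0 hqp
  set S : ℝ := ∑' k, gAux p (θ * p) k with hSdef
  have hS0 : 0 ≤ S := tsum_nonneg (fun k => gAux_nonneg p (θ * p) k)
  have hCν0 : (0:ℝ) < Cν := lt_trans one_pos hC
  refine ⟨Cν * (S + 1), by nlinarith, ?_⟩
  intro Y _ _ _ _ ν hdbl hball M η hM hη hLip x
  rcases eq_or_lt_of_le hM with hM0 | hM0
  · -- M = 0 : η is constant and both sides vanish
    have hzero : besovPointEnergy ν θ p η x = 0 := by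
      unfold besovPointEnergy
      have h0 : ∀ y : Y, (if x = y then 0 else
          ENNReal.ofReal (|η x - η y| ^ p) /
            (ENNReal.ofReal (dist x y ^ (θ * p)) * ν (ball x (dist x y)))) = 0 := by
        intro y
        split
        · rfl
        · have h1 : dist (η x) (η y) ≤ 0 := by
            have h2 := hLip.dist_le_mul x y
            rwa [Real.coe_toNNReal M hM, ← hM0, zero_mul] at h2
          have h2 : η x = η y := dist_le_zero.mp h1
          rw [h2, sub_self, abs_zero, Real.zero_rpow (ne_of_gt hp0),
            ENNReal.ofReal_zero, ENNReal.zero_div]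
      simp only [h0]
      exact lintegral_zero
    rw [hzero]
    exact zero_le
  · -- main case : M > 0
    set s : ℤ → ℝ := fun k => (2:ℝ) ^ k / M with hsdef
    have hspos : ∀ k, 0 < s k := fun k => div_pos (zpow_pos (by norm_num) k) hM0
    have hs2 : ∀ k, s (k + 1) = 2 * s k := by
      intro k
      simp only [hsdef]
      rw [zpow_add_one₀ (by norm_num : (2:ℝ) ≠ 0)]
      ring
    set A : ℤ → Set Y := fun k => {y | dist x y ∈ Ico (s k) (s (k + 1))} with hAdef
    have hcover : ({x}ᶜ : Set Y) ⊆ ⋃ k, A k := by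
      intro y hy
      have hyx : y ≠ x := hy
      have hd : 0 < dist x y := dist_pos.mpr (Ne.symm hyx)
      obtain ⟨k, hk1, hk2⟩ := exists_mem_Ico_zpow (mul_pos hM0 hd) (by norm_num : (1:ℝ) < 2)
      refine mem_iUnion.mpr ⟨k, ?_, ?_⟩
      · rw [mul_comm] at hk1
        exact (div_le_iff₀ hM0).mpr hk1
      · rw [mul_comm] at hk2
        exact (lt_div_iff₀ hM0).mpr hk2
    unfold besovPointEnergy
    have hfx : ∀ y : Y, (if x = y then 0 else
        ENNReal.ofReal (|η x - η y| ^ p) /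
          (ENNReal.ofReal (dist x y ^ (θ * p)) * ν (ball x (dist x y)))) =
        ({x}ᶜ : Set Y).indicator (fun y => if x = y then 0 else
          ENNReal.ofReal (|η x - η y| ^ p) /
            (ENNReal.ofReal (dist x y ^ (θ * p)) * ν (ball x (dist x y)))) y := by
      intro y
      by_cases h : y = x
      · subst h
        rw [indicator_of_notMem (by simp)]
        simp
      · rw [indicator_of_mem (by simp [h])]
    have hterm : ∀ k : ℤ, (∫⁻ y in A k, (if x = y then 0 else
        ENNReal.ofReal (|η x - η y| ^ p) /
          (ENNReal.ofReal (dist x y ^ (θ * p)) * ν (ball x (dist x y)))) ∂ν) ≤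
        ENNReal.ofReal (Cν * M ^ (θ * p)) * ENNReal.ofReal (gAux p (θ * p) k) := by
      intro k
      obtain ⟨hBpos, hBfin⟩ := hball x (s k) (hspos k)
      set B := ν (ball x (s k)) with hBdef
      set c : ℝ≥0∞ := ENNReal.ofReal ((min 1 ((2:ℝ) ^ (k + 1))) ^ p) /
        (ENNReal.ofReal ((s k) ^ (θ * p)) * B) with hcdef
      have hpt : ∀ y ∈ A k, (if x = y then 0 else
          ENNReal.ofReal (|η x - η y| ^ p) /
            (ENNReal.ofReal (dist x y ^ (θ * p)) * ν (ball x (dist x y)))) ≤ c := by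
        intro y hy
        obtain ⟨hd1, hd2⟩ := hy
        have hdpos : 0 < dist x y := lt_of_lt_of_le (hspos k) hd1
        have hxy : ¬ (x = y) := fun h => by simp [h] at hdpos
        rw [if_neg hxy]
        apply ENNReal.div_le_div
        · apply ENNReal.ofReal_le_ofReal
          apply Real.rpow_le_rpow (abs_nonneg _) ?_ hp0.le
          apply le_min
          · obtain ⟨ha1, ha2⟩ := hη x
            obtain ⟨hb1, hb2⟩ := hη y
            rw [abs_sub_le_iff]
            constructor <;> linarith
          · have h1 : |η x - η y| ≤ M * dist x y := by
              have h2 := hLip.dist_le_mul x y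
              rwa [Real.coe_toNNReal M hM, Real.dist_eq] at h2
            have h2 : M * dist x y ≤ M * s (k + 1) := mul_le_mul_of_nonneg_left hd2.le hM
            have h3 : M * s (k + 1) = (2:ℝ) ^ (k + 1) := by
              simp only [hsdef]
              field_simp
            linarith
        · apply mul_le_mul'
          · exact ENNReal.ofReal_le_ofReal (Real.rpow_le_rpow (hspos k).le hd1 hq0.le)
          · exact measure_mono (ball_subset_ball hd1)
      have h1 : (∫⁻ y in A k, (if x = y then 0 else
          ENNReal.ofReal (|η x - η y| ^ p) /
            (ENNReal.ofReal (dist x y ^ (θ * p)) * ν (ball x (dist x y)))) ∂ν) ≤ c * ν (A k) := by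
        calc (∫⁻ y in A k, (if x = y then 0 else
            ENNReal.ofReal (|η x - η y| ^ p) /
              (ENNReal.ofReal (dist x y ^ (θ * p)) * ν (ball x (dist x y)))) ∂ν)
            ≤ ∫⁻ _ in A k, c ∂ν := setLIntegral_mono measurable_const hpt
          _ = c * ν (A k) := setLIntegral_const _ _
      have hsub : A k ⊆ ball x (s (k + 1)) := by
        intro y hy
        rw [mem_ball, dist_comm]
        exact hy.2
      have h2 : ν (A k) ≤ ENNReal.ofReal Cν * B := by
        calc ν (A k) ≤ ν (ball x (s (k + 1))) := measure_mono hsub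
          _ = ν (ball x (2 * s k)) := by rw [hs2]
          _ ≤ ENNReal.ofReal Cν * B := hdbl x (s k) (hspos k)
      have hb0 : ENNReal.ofReal ((s k) ^ (θ * p)) ≠ 0 :=
        (ENNReal.ofReal_pos.mpr (Real.rpow_pos_of_pos (hspos k) _)).ne'
      have hkey : c * (ENNReal.ofReal Cν * B) =
          ENNReal.ofReal Cν * (ENNReal.ofReal ((min 1 ((2:ℝ) ^ (k + 1))) ^ p) /
            ENNReal.ofReal ((s k) ^ (θ * p))) :=
        ennreal_cancel _ _ _ _ hb0 ENNReal.ofReal_ne_top hBpos.ne' hBfin.ne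
      have hdiv : ENNReal.ofReal ((min 1 ((2:ℝ) ^ (k + 1))) ^ p) /
          ENNReal.ofReal ((s k) ^ (θ * p)) =
          ENNReal.ofReal ((min 1 ((2:ℝ) ^ (k + 1))) ^ p / (s k) ^ (θ * p)) :=
        (ENNReal.ofReal_div_of_pos (Real.rpow_pos_of_pos (hspos k) _)).symm
      have harith : (min 1 ((2:ℝ) ^ (k + 1))) ^ p / (s k) ^ (θ * p) =
          M ^ (θ * p) * gAux p (θ * p) k := by
        have h4 : (s k) ^ (θ * p) = ((2:ℝ) ^ k) ^ (θ * p) / M ^ (θ * p) := by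
          simp only [hsdef]
          exact Real.div_rpow (by positivity) hM0.le _
        have ha : (0:ℝ) < ((2:ℝ) ^ k) ^ (θ * p) :=
          Real.rpow_pos_of_pos (zpow_pos (by norm_num) k) _
        have hbb : (0:ℝ) < M ^ (θ * p) := Real.rpow_pos_of_pos hM0 _
        unfold gAux
        rw [h4, Real.rpow_neg (by positivity : (0:ℝ) ≤ (2:ℝ) ^ k)]
        field_simp
      calc (∫⁻ y in A k, (if x = y then 0 else
          ENNReal.ofReal (|η x - η y| ^ p) /
            (ENNReal.ofReal (dist x y ^ (θ * p)) * ν (ball x (dist x y)))) ∂ν)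
          ≤ c * (ENNReal.ofReal Cν * B) := le_trans h1 (mul_le_mul_right h2 c)
        _ = ENNReal.ofReal Cν * ENNReal.ofReal (M ^ (θ * p) * gAux p (θ * p) k) := by
            rw [hkey, hdiv, harith]
        _ = ENNReal.ofReal (Cν * M ^ (θ * p)) * ENNReal.ofReal (gAux p (θ * p) k) := by
            rw [← ENNReal.ofReal_mul hCν0.le, ← ENNReal.ofReal_mul (by positivity), mul_assoc]
    calc (∫⁻ y, (if x = y then 0 else
      ENNReal.ofReal (|η x - η y| ^ p) /
        (ENNReal.ofReal (dist x y ^ (θ * p)) * ν (ball x (dist x y)))) ∂ν)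
      = ∫⁻ y in ({x}ᶜ : Set Y), (if x = y then 0 else
          ENNReal.ofReal (|η x - η y| ^ p) /
            (ENNReal.ofReal (dist x y ^ (θ * p)) * ν (ball x (dist x y)))) ∂ν := by
          rw [← lintegral_indicator (measurableSet_singleton x).compl]
          exact lintegral_congr hfx
    _ ≤ ∫⁻ y in ⋃ k, A k, (if x = y then 0 else
          ENNReal.ofReal (|η x - η y| ^ p) /
            (ENNReal.ofReal (dist x y ^ (θ * p)) * ν (ball x (dist x y)))) ∂ν :=
        lintegral_mono_set hcover
    _ ≤ ∑' k, ∫⁻ y in A k, (if x = y then 0 else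
          ENNReal.ofReal (|η x - η y| ^ p) /
            (ENNReal.ofReal (dist x y ^ (θ * p)) * ν (ball x (dist x y)))) ∂ν :=
        lintegral_iUnion_le _ _
    _ ≤ ∑' k, ENNReal.ofReal (Cν * M ^ (θ * p)) * ENNReal.ofReal (gAux p (θ * p) k) :=
        ENNReal.tsum_le_tsum hterm
    _ = ENNReal.ofReal (Cν * M ^ (θ * p)) * ∑' k, ENNReal.ofReal (gAux p (θ * p) k) :=
        ENNReal.tsum_mul_left
    _ = ENNReal.ofReal (Cν * M ^ (θ * p)) * ENNReal.ofReal S := by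
        rw [← ENNReal.ofReal_tsum_of_nonneg (fun k => gAux_nonneg p (θ * p) k) hsum]
    _ = ENNReal.ofReal (Cν * M ^ (θ * p) * S) := (ENNReal.ofReal_mul (by positivity)).symm
    _ ≤ ENNReal.ofReal (Cν * (S + 1) * M ^ (θ * p)) := by
        apply ENNReal.ofReal_le_ofReal
        have hMq : (0:ℝ) ≤ M ^ (θ * p) := Real.rpow_nonneg hM _
        nlinarith
end

section
/- Assume Y is complete with doubling measure ν, uniformly perfect at x_0 with constant κ, 0 < θ, 1 ≤ p < ∞, and 0 < 2r ≤ R with B(x_0,2R) ≠ Y. Then cap_{θ,p}(B(x_0,r), B(x_0,R)) ≥ c · ν(B(x_0,r)) / R^{θp}, where c > 0 depends only on θ, p, κ and the doubling constant. -/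
open MeasureTheory Metric Set ENNReal

lemma doubling_iter' {Y : Type*} [MetricSpace Y] [MeasurableSpace Y] {ν : Measure Y} {Cν : ℝ}
    (hd : IsDoublingWith ν Cν) (k : ℕ) (x : Y) {s : ℝ} (hs : 0 < s) :
    ν (ball x (2 ^ k * s)) ≤ (ENNReal.ofReal Cν) ^ k * ν (ball x s) := by
  induction k with
  | zero => simp
  | succ n ih =>
      have h2 : (2:ℝ) ^ (n+1) * s = 2 * (2 ^ n * s) := by ring
      rw [h2]
      calc ν (ball x (2 * (2 ^ n * s))) ≤ ENNReal.ofReal Cν * ν (ball x (2 ^ n * s)) :=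
            hd x _ (by positivity)
        _ ≤ ENNReal.ofReal Cν * ((ENNReal.ofReal Cν) ^ n * ν (ball x s)) :=
            mul_le_mul_right ih _
        _ = (ENNReal.ofReal Cν) ^ (n+1) * ν (ball x s) := by ring

lemma exists_annulus_point' {Y : Type*} [MetricSpace Y] (x₀ : Y) {κ R : ℝ}
    (hκ : 1 < κ) (hR : 0 < R) (hup : UnifPerfectAt x₀ κ) (hne : ball x₀ (2*R) ≠ univ) :
    ∃ y : Y, 3/2*R ≤ dist x₀ y ∧ dist x₀ y < 3/2*κ*R := by
  obtain ⟨w, hw⟩ := (ne_univ_iff_exists_notMem _).mp hne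
  have hw2 : 2*R ≤ dist x₀ w := by
    rw [mem_ball, dist_comm] at hw; linarith [not_lt.mp hw]
  set T : Set ℝ := {s : ℝ | 3/2*R ≤ s ∧ ∃ z : Y, dist x₀ z = s} with hT
  have hTne : T.Nonempty := ⟨dist x₀ w, by linarith, w, rfl⟩
  have hTbdd : BddBelow T := ⟨3/2*R, fun s hs => hs.1⟩
  set m := sInf T with hm
  have h1 : 3/2*R ≤ m := le_csInf hTne fun s hs => hs.1
  have hmw : m ≤ dist x₀ w := csInf_le hTbdd ⟨by linarith, w, rfl⟩
  have hmκ : m / κ < 3/2*R := by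
    by_contra h
    push_neg at h
    have hmpos : 0 < m / κ := div_pos (by linarith) (by linarith)
    have hball : ball x₀ (κ * (m/κ)) ≠ univ := by
      rw [mul_div_cancel₀ _ (by linarith : κ ≠ 0)]
      intro hu
      have : w ∈ ball x₀ m := hu ▸ mem_univ w
      rw [mem_ball, dist_comm] at this; linarith
    obtain ⟨z, hz1, hz2⟩ := hup (m/κ) hmpos hball
    rw [mul_div_cancel₀ _ (by linarith : κ ≠ 0), mem_ball, dist_comm] at hz1
    rw [mem_ball, dist_comm] at hz2
    have hzT : dist x₀ z ∈ T := ⟨by linarith [not_lt.mp hz2], z, rfl⟩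
    have := csInf_le hTbdd hzT
    linarith
  have hmlt : m < 3/2*κ*R := by
    have := (div_lt_iff₀ (by linarith : (0:ℝ) < κ)).mp hmκ
    linarith [this]
  obtain ⟨s, hsT, hslt⟩ := exists_lt_of_csInf_lt hTne hmlt
  obtain ⟨hs1, z, hz⟩ := hsT
  exact ⟨z, by rw [hz]; exact hs1, by rw [hz]; exact hslt⟩


universe u

theorem stmt7 (θ p κ Cν : ℝ) (hθ : 0 < θ) (hp : 1 ≤ p) (hκ : 1 < κ) (hC : 1 < Cν) :
    ∃ c : ℝ, 0 < c ∧
      ∀ (Y : Type u) [MetricSpace Y] [MeasurableSpace Y] [BorelSpace Y] [CompleteSpace Y]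
        (ν : Measure Y), IsDoublingWith ν Cν → BallsPosFinite ν →
        ∀ x₀ : Y, UnifPerfectAt x₀ κ →
        ∀ r R : ℝ, 0 < r → 2 * r ≤ R → ball x₀ (2 * R) ≠ univ →
          ENNReal.ofReal c * (ν (ball x₀ r) / ENNReal.ofReal (R ^ (θ * p))) ≤
            besovCondCap ν θ p (ball x₀ r) (ball x₀ R) := by
  classical
  obtain ⟨k, hk⟩ : ∃ k : ℕ, 12*κ < (2:ℝ)^k := pow_unbounded_of_one_lt (12*κ) one_lt_two
  have hκ0 : (0:ℝ) < κ := by linarith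
  have h3κ : (0:ℝ) < (3*κ) ^ (θ*p) := Real.rpow_pos_of_pos (by linarith) _
  have hCν0 : (0:ℝ) < Cν := by linarith
  have hCk0 : (0:ℝ) < Cν ^ k := pow_pos hCν0 k
  have hθp : (0:ℝ) ≤ θ * p := le_of_lt (mul_pos hθ (by linarith))
  refine ⟨((3*κ) ^ (θ*p) * Cν ^ k)⁻¹, inv_pos.mpr (mul_pos h3κ hCk0), ?_⟩
  intro Y _ _ _ _ ν hdoub hballs x₀ hup r R hr hrR hne
  have hR : 0 < R := by linarith
  have hr2 : r ≤ R/2 := by linarith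
  obtain ⟨y, hy1, hy2⟩ := exists_annulus_point' x₀ hκ hR hup hne
  refine le_iInf fun u => le_iInf fun hu => ?_
  obtain ⟨hbound, ⟨G, hG, hsub, hone⟩, hcomp, hsupp⟩ := hu
  -- notation
  set A : ℝ≥0∞ := ENNReal.ofReal ((3*κ) ^ (θ*p)) with hA
  set Rp : ℝ≥0∞ := ENNReal.ofReal (R ^ (θ*p)) with hRp
  set Ck : ℝ≥0∞ := (ENNReal.ofReal Cν) ^ k with hCkdef
  set νB : ℝ≥0∞ := ν (ball y (R/2)) with hνBdef
  have hνBfin := hballs y (R/2) (by positivity)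
  have hνB0 : νB ≠ 0 := hνBfin.1.ne'
  have hνBt : νB ≠ ∞ := hνBfin.2.ne
  have hRppos : (0:ℝ) < R ^ (θ*p) := Real.rpow_pos_of_pos hR _
  have hRp0 : Rp ≠ 0 := by
    simp only [hRp, ne_eq, ENNReal.ofReal_eq_zero, not_le]; exact hRppos
  have hA0 : A ≠ 0 := by
    simp only [hA, ne_eq, ENNReal.ofReal_eq_zero, not_le]; exact h3κ
  have hAt : A ≠ ∞ := ENNReal.ofReal_ne_top
  have hRpt : Rp ≠ ∞ := ENNReal.ofReal_ne_top
  have hCk0' : Ck ≠ 0 := pow_ne_zero k (by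
    simp only [ne_eq, ENNReal.ofReal_eq_zero, not_le]; exact hCν0)
  have hCkt : Ck ≠ ∞ := pow_ne_top ENNReal.ofReal_ne_top
  -- u = 0 on ball y (R/2)
  have hz0 : ∀ z ∈ ball y (R/2), u z = 0 := by
    intro z hz
    rw [mem_ball] at hz
    refine image_eq_zero_of_notMem_tsupport fun hmem => ?_
    have := hsupp hmem
    rw [mem_ball] at this
    have ht := dist_triangle x₀ z y
    have hcd : dist x₀ z = dist z x₀ := dist_comm _ _
    linarith
  -- pointwise lower bound on the point energy
  have key : ∀ x ∈ ball x₀ r,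
      ENNReal.ofReal (((3*κ) ^ (θ*p) * Cν ^ k)⁻¹) / Rp ≤ besovPointEnergy ν θ p u x := by
    intro x hx
    have hdx : dist x x₀ < r := mem_ball.mp hx
    have hux : u x = 1 := hone x (hsub hx)
    set M : ℝ≥0∞ := (A * Rp * ν (ball x (3*κ*R)))⁻¹ with hM
    have hARp : ENNReal.ofReal ((3*κ*R) ^ (θ*p)) = A * Rp := by
      rw [hA, hRp, ← ENNReal.ofReal_mul (le_of_lt h3κ), ← Real.mul_rpow (by linarith) hR.le]
    -- lower bound for the integrand on ball y (R/2)
    have hstep : ∀ z : Y, (ball y (R/2)).indicator (fun _ => M) z ≤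
        (if x = z then 0 else ENNReal.ofReal (|u x - u z| ^ p) /
          (ENNReal.ofReal (dist x z ^ (θ * p)) * ν (ball x (dist x z)))) := by
      intro z
      by_cases hz : z ∈ ball y (R/2)
      · rw [Set.indicator_of_mem hz]
        have hzy : dist z y < R/2 := mem_ball.mp hz
        have htz : dist x₀ y ≤ dist x₀ z + dist z y := dist_triangle x₀ z y
        have hzfar : R < dist x₀ z := by linarith
        have hxz : x ≠ z := by
          intro hxez
          rw [← hxez, dist_comm] at hzfar
          linarith
        have hdle : dist x z ≤ 3*κ*R := by
          have t1 : dist x z ≤ dist x y + dist y z := dist_triangle x y z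
          have t2 : dist x y ≤ dist x x₀ + dist x₀ y := dist_triangle x x₀ y
          have t3 : dist y z = dist z y := dist_comm y z
          nlinarith [hκ, hR]
        rw [if_neg hxz, hz0 z hz, hux]
        have hnum : |(1:ℝ) - 0| ^ p = 1 := by
          rw [sub_zero, abs_one, Real.one_rpow]
        rw [hnum, ENNReal.ofReal_one]
        rw [hM, ← hARp]
        rw [one_div, ENNReal.inv_le_inv]
        exact mul_le_mul' (ENNReal.ofReal_le_ofReal
            (Real.rpow_le_rpow dist_nonneg hdle hθp))
          (measure_mono (ball_subset_ball hdle))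
      · rw [Set.indicator_of_notMem hz]
        exact zero_le
    have hPE : M * νB ≤ besovPointEnergy ν θ p u x := by
      calc M * νB = ∫⁻ z, (ball y (R/2)).indicator (fun _ => M) z ∂ν := by
            rw [lintegral_indicator measurableSet_ball, setLIntegral_const]
        _ ≤ besovPointEnergy ν θ p u x := lintegral_mono hstep
    -- compare ν (ball x (3κR)) with νB using doubling
    have hball_sub : ball x (3*κ*R) ⊆ ball y ((2:ℝ)^k * (R/2)) := by
      refine ball_subset_ball' ?_
      have t1 : dist x y ≤ dist x x₀ + dist x₀ y := dist_triangle x x₀ y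
      nlinarith [hκ, hR, hk]
    have hCkbd : ν (ball x (3*κ*R)) ≤ Ck * νB :=
      le_trans (measure_mono hball_sub) (doubling_iter' hdoub k y (by positivity))
    have hlow : (A * Rp * Ck)⁻¹ ≤ M * νB := by
      have ha : A * Rp * ν (ball x (3*κ*R)) ≤ (A * Rp * Ck) * νB := by
        calc A * Rp * ν (ball x (3*κ*R)) ≤ A * Rp * (Ck * νB) := mul_le_mul_right hCkbd _
          _ = (A * Rp * Ck) * νB := by ring
      calc (A * Rp * Ck)⁻¹ = νB * ((A * Rp * Ck) * νB)⁻¹ := by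
            rw [ENNReal.mul_inv (Or.inr hνBt) (Or.inr hνB0),
              mul_comm ((A * Rp * Ck)⁻¹) (νB⁻¹), ← mul_assoc,
              ENNReal.mul_inv_cancel hνB0 hνBt, one_mul]
        _ ≤ νB * (A * Rp * ν (ball x (3*κ*R)))⁻¹ :=
            mul_le_mul_right (ENNReal.inv_le_inv.mpr ha) _
        _ = M * νB := mul_comm _ _
    refine le_trans (le_of_eq ?_) (le_trans hlow hPE)
    rw [ENNReal.ofReal_inv_of_pos (mul_pos h3κ hCk0),
      ENNReal.ofReal_mul (le_of_lt h3κ), ENNReal.ofReal_pow hCν0.le]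
    rw [ENNReal.div_eq_inv_mul, ← ENNReal.mul_inv (Or.inl hRp0) (Or.inr ?_)]
    · congr 1
      rw [← hA, ← hCkdef]; ring
    · exact mul_ne_zero hA0 hCk0'
  -- integrate over ball x₀ r
  calc ENNReal.ofReal (((3*κ) ^ (θ*p) * Cν ^ k)⁻¹) * (ν (ball x₀ r) / Rp)
      = (ENNReal.ofReal (((3*κ) ^ (θ*p) * Cν ^ k)⁻¹) / Rp) * ν (ball x₀ r) := by
        rw [ENNReal.div_eq_inv_mul, ENNReal.div_eq_inv_mul]; ring
    _ = ∫⁻ x, (ball x₀ r).indicator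
          (fun _ => ENNReal.ofReal (((3*κ) ^ (θ*p) * Cν ^ k)⁻¹) / Rp) x ∂ν := by
        rw [lintegral_indicator measurableSet_ball, setLIntegral_const]
    _ ≤ ∫⁻ x, besovPointEnergy ν θ p u x ∂ν := by
        refine lintegral_mono fun x => ?_
        by_cases hx : x ∈ ball x₀ r
        · rw [Set.indicator_of_mem hx]; exact key x hx
        · rw [Set.indicator_of_notMem hx]; exact zero_le
    _ = besovEnergy ν θ p u := rfl
end

section
/- Assume Y is complete with doubling measure ν, 0 < θ < 1, 1 ≤ p < ∞, and 0 < 2r ≤ R. Then cap_{θ,p}(B(x_0,r), B(x_0,R)) ≤ C · min{ ν(B(x_0,r))/r^{θp}, ν(B(x_0,R))/R^{θp} }, with C depending only on θ, p and the doubling constant. -/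
open MeasureTheory Metric Set ENNReal

section helpers

open MeasureTheory Metric Set ENNReal

variable {Y : Type*} [MetricSpace Y] [MeasurableSpace Y]

lemma ennreal_cancel_s8 {a K D m : ℝ≥0∞} (hm0 : m ≠ 0) (hm : m ≠ ∞) :
    a / (D * m) * (K * m) = K * (a / D) := by
  rw [div_eq_mul_inv, div_eq_mul_inv, ENNReal.mul_inv (Or.inr hm) (Or.inr hm0)]
  calc a * (D⁻¹ * m⁻¹) * (K * m) = K * (a * D⁻¹) * (m⁻¹ * m) := by ring
    _ = K * (a * D⁻¹) := by rw [ENNReal.inv_mul_cancel hm0 hm, mul_one]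

lemma doubling_pow {ν : Measure Y} {Cν : ℝ} (hd : IsDoublingWith ν Cν)
    (k : ℕ) (x : Y) {s : ℝ} (hs : 0 < s) :
    ν (ball x (2 ^ k * s)) ≤ (ENNReal.ofReal Cν) ^ k * ν (ball x s) := by
  induction k with
  | zero => simp
  | succ n ih =>
      have h2 : (2:ℝ) ^ (n+1) * s = 2 * (2 ^ n * s) := by ring
      rw [h2]
      calc ν (ball x (2 * (2 ^ n * s))) ≤ ENNReal.ofReal Cν * ν (ball x (2 ^ n * s)) :=
            hd x _ (by positivity)
        _ ≤ ENNReal.ofReal Cν * ((ENNReal.ofReal Cν) ^ n * ν (ball x s)) :=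
            mul_le_mul_right ih _
        _ = (ENNReal.ofReal Cν) ^ (n+1) * ν (ball x s) := by ring

lemma compact_closedBall_of_doubling [OpensMeasurableSpace Y] [CompleteSpace Y]
    {ν : Measure Y} {Cν : ℝ} (hd : IsDoublingWith ν Cν)
    (hpf : BallsPosFinite ν) (x₀ : Y) {t : ℝ} (ht : 0 < t) :
    IsCompact (closedBall x₀ t) := by
  refine TotallyBounded.isCompact_of_isClosed ?_ Metric.isClosed_closedBall
  rw [Metric.totallyBounded_iff]
  intro ε hε
  classical
  set S : Set (Set Y) := {F | F ⊆ closedBall x₀ t ∧ F.Pairwise fun a b => ε ≤ dist a b} with hS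
  obtain ⟨M, hM⟩ : ∃ M, Maximal (· ∈ S) M := by
    apply zorn_subset
    intro c hcS hchain
    refine ⟨⋃₀ c, ⟨?_, ?_⟩, fun s hs => subset_sUnion_of_mem hs⟩
    · exact sUnion_subset fun s hs => (hcS hs).1
    · intro a ha b hb hab
      obtain ⟨sa, hsa, has⟩ := ha; obtain ⟨sb, hsb, hbs⟩ := hb
      rcases hchain.total hsa hsb with h | h
      · exact (hcS hsb).2 (h has) hbs hab
      · exact (hcS hsa).2 has (h hbs) hab
  have hMsub : M ⊆ closedBall x₀ t := hM.prop.1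
  have hMsep : M.Pairwise fun a b => ε ≤ dist a b := hM.prop.2
  set c : ℝ≥0∞ := ENNReal.ofReal Cν with hc
  obtain ⟨k, hk⟩ : ∃ k : ℕ, 2 * t / (ε / 2) < 2 ^ k :=
    pow_unbounded_of_one_lt _ one_lt_two
  have hεpos : (0:ℝ) < ε / 2 := by linarith
  set δ : ℝ≥0∞ := ν (ball x₀ t) / c ^ k with hδ
  have hνt := hpf x₀ t ht
  have hck0 : c ^ k ≠ 0 := by
    have : (0:ℝ≥0∞) < c := by
      by_contra h
      push_neg at h
      have hc0 : c = 0 := le_antisymm h (zero_le (a := _))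
      have := hd x₀ t ht
      rw [← hc, hc0, zero_mul] at this
      exact absurd (le_antisymm (le_trans (measure_mono (ball_subset_ball (by linarith))) this) (zero_le (a := _))) (hpf x₀ (2*t) (by linarith)).1.ne'
    exact pow_ne_zero k this.ne'
  have hckt : c ^ k ≠ ∞ := by
    simp [hc, pow_ne_top, ENNReal.ofReal_ne_top]
  have hδpos : 0 < δ := ENNReal.div_pos hνt.1.ne' hckt
  have hδlt : δ ≠ ∞ := by
    refine (ENNReal.div_lt_top hνt.2.ne hck0).ne
  have hδball : ∀ z ∈ closedBall x₀ t, δ ≤ ν (ball z (ε/2)) := by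
    intro z hz
    have h1 : ν (ball x₀ t) ≤ c ^ k * ν (ball z (ε/2)) := by
      refine le_trans (measure_mono ?_) (doubling_pow hd k z hεpos)
      intro y hy
      rw [mem_ball] at hy ⊢
      have hz' : dist z x₀ ≤ t := hz
      have h2 : 2 * t < 2 ^ k * (ε/2) := by
        rw [div_lt_iff₀ hεpos] at hk; linarith
      calc dist y z ≤ dist y x₀ + dist x₀ z := dist_triangle _ _ _
        _ < t + t := by rw [dist_comm x₀ z]; exact add_lt_add_of_lt_of_le hy hz'
        _ < 2 ^ k * (ε/2) := by linarith
    exact ENNReal.div_le_of_le_mul (by rwa [mul_comm] at h1)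
  have hMfin : M.Finite := by
    by_contra hinf
    rw [← Set.not_infinite, not_not] at hinf
    set B : ℝ≥0∞ := ν (ball x₀ (t + ε)) with hB
    have hBfin : B ≠ ∞ := (hpf x₀ (t+ε) (by linarith)).2.ne
    obtain ⟨n, hn⟩ : ∃ n : ℕ, B / δ < n := ENNReal.exists_nat_gt
      (by simp [ENNReal.div_eq_top, hδpos.ne', hBfin, hδlt])
    obtain ⟨F, hFM, hFcard⟩ := hinf.exists_subset_card_eq n
    have hdisj : (↑F : Set Y).PairwiseDisjoint (fun z => ball z (ε/2)) := by
      intro a ha b hb hab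
      refine Set.disjoint_left.2 fun y hya hyb => ?_
      have hya' : dist y a < ε/2 := mem_ball.1 hya
      have hyb' : dist y b < ε/2 := mem_ball.1 hyb
      have : dist a b < ε := by
        calc dist a b ≤ dist a y + dist y b := dist_triangle _ _ _
          _ < ε/2 + ε/2 := add_lt_add (by rwa [dist_comm] at hya') hyb'
          _ = ε := by ring
      exact absurd (hMsep (hFM ha) (hFM hb) hab) (not_le.2 this)
    have hsum : (n : ℝ≥0∞) * δ ≤ B := by
      calc (n : ℝ≥0∞) * δ = ∑ _z ∈ F, δ := by
            rw [Finset.sum_const, hFcard, nsmul_eq_mul]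
        _ ≤ ∑ z ∈ F, ν (ball z (ε/2)) :=
            Finset.sum_le_sum fun z hz => hδball z (hMsub (hFM hz))
        _ = ν (⋃ z ∈ F, ball z (ε/2)) :=
            (measure_biUnion_finset hdisj fun z _ => measurableSet_ball).symm
        _ ≤ B := by
            refine measure_mono (Set.iUnion₂_subset fun z hz => ?_)
            intro y hy
            rw [mem_ball] at hy ⊢
            have : dist z x₀ ≤ t := hMsub (hFM hz)
            calc dist y x₀ ≤ dist y z + dist z x₀ := dist_triangle _ _ _
              _ < ε/2 + t := add_lt_add_of_lt_of_le hy this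
              _ < t + ε := by linarith
    rw [ENNReal.div_lt_iff (Or.inl hδpos.ne') (Or.inl hδlt)] at hn
    exact absurd hsum (not_le.2 hn)
  refine ⟨M, hMfin, fun y hy => ?_⟩
  by_contra hcov
  simp only [Set.mem_iUnion, mem_ball, not_exists, not_and, exists_prop, not_lt] at hcov
  have hnew : M ∪ {y} ∈ S := by
    constructor
    · exact Set.union_subset hMsub (by simpa using hy)
    · intro a ha b hb hab
      rcases ha with ha | ha <;> rcases hb with hb | hb
      · exact hMsep ha hb hab
      · rw [Set.mem_singleton_iff] at hb; subst hb
        rw [dist_comm]; exact hcov a ha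
      · rw [Set.mem_singleton_iff] at ha; subst ha
        exact hcov b hb
      · rw [Set.mem_singleton_iff] at ha hb; subst ha; subst hb; exact absurd rfl hab
  have : M ∪ {y} ⊆ M := hM.2 hnew Set.subset_union_left
  have hyM : y ∈ M := this (Set.mem_union_right _ rfl)
  have := hcov y hyM
  simp at this
  linarith

noncomputable def besovQ1 (θ p : ℝ) : ℝ≥0∞ := ENNReal.ofReal ((2:ℝ) ^ (-(p - θ*p)))
noncomputable def besovQ2 (θ p : ℝ) : ℝ≥0∞ := ENNReal.ofReal ((2:ℝ) ^ (-(θ*p)))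
noncomputable def besovKin (θ p Cν : ℝ) : ℝ≥0∞ :=
  (ENNReal.ofReal Cν)^2 * (ENNReal.ofReal ((2:ℝ) ^ (2*p + θ*p)) * (1 - besovQ1 θ p)⁻¹
    + (1 - besovQ2 θ p)⁻¹)
noncomputable def besovKtot (θ p Cν : ℝ) : ℝ≥0∞ :=
  ENNReal.ofReal Cν * besovKin θ p Cν + (ENNReal.ofReal Cν)^4 * (1 - besovQ2 θ p)⁻¹

lemma besovQ1_lt_one {θ p : ℝ} (hθ1 : θ < 1) (hp : 1 ≤ p) : besovQ1 θ p < 1 := by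
  rw [besovQ1, ENNReal.ofReal_lt_one]
  exact Real.rpow_lt_one_of_one_lt_of_neg one_lt_two (by nlinarith)

lemma besovQ2_lt_one {θ p : ℝ} (hθ0 : 0 < θ) (hp : 1 ≤ p) : besovQ2 θ p < 1 := by
  rw [besovQ2, ENNReal.ofReal_lt_one]
  exact Real.rpow_lt_one_of_one_lt_of_neg one_lt_two (by nlinarith)

lemma besovKtot_ne_top {θ p Cν : ℝ} (hθ0 : 0 < θ) (hθ1 : θ < 1) (hp : 1 ≤ p) :
    besovKtot θ p Cν ≠ ∞ := by
  have h1 : (1 - besovQ1 θ p)⁻¹ ≠ ∞ := by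
    rw [ENNReal.inv_ne_top]
    simp only [ne_eq, tsub_eq_zero_iff_le, not_le]
    exact besovQ1_lt_one hθ1 hp
  have h2 : (1 - besovQ2 θ p)⁻¹ ≠ ∞ := by
    rw [ENNReal.inv_ne_top]
    simp only [ne_eq, tsub_eq_zero_iff_le, not_le]
    exact besovQ2_lt_one hθ0 hp
  rw [besovKtot, besovKin]
  refine ENNReal.add_ne_top.2 ⟨ENNReal.mul_ne_top ENNReal.ofReal_ne_top
    (ENNReal.mul_ne_top (by simp [ENNReal.ofReal_ne_top]) (ENNReal.add_ne_top.2
      ⟨ENNReal.mul_ne_top ENNReal.ofReal_ne_top h1, h2⟩)), ?_⟩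
  exact ENNReal.mul_ne_top (by simp [ENNReal.ofReal_ne_top]) h2

open Classical in
lemma lintegral_annulus_le [OpensMeasurableSpace Y]
    {ν : Measure Y} {Cν θ p : ℝ} (hd : IsDoublingWith ν Cν) (hpf : BallsPosFinite ν)
    (hθp : 0 ≤ θ * p) {u : Y → ℝ} (x : Y) {a N : ℝ} (ha : 0 < a)
    (hnum : ∀ y : Y, dist x y ≤ 2 * a → |u x - u y| ^ p ≤ N) :
    ∫⁻ y in closedBall x (2*a) \ closedBall x a,
        (if x = y then 0 else ENNReal.ofReal (|u x - u y| ^ p) /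
          (ENNReal.ofReal (dist x y ^ (θ * p)) * ν (ball x (dist x y)))) ∂ν
      ≤ (ENNReal.ofReal Cν)^2 * (ENNReal.ofReal N / ENNReal.ofReal (a ^ (θ * p))) := by
  set m := ν (ball x a) with hm
  obtain ⟨hm0, hmt⟩ := hpf x a ha
  set const : ℝ≥0∞ := ENNReal.ofReal N / (ENNReal.ofReal (a ^ (θ*p)) * m) with hconst
  have hann : MeasurableSet (closedBall x (2*a) \ closedBall x a) :=
    measurableSet_closedBall.diff measurableSet_closedBall
  have hpt : ∀ y ∈ closedBall x (2*a) \ closedBall x a,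
      (if x = y then 0 else ENNReal.ofReal (|u x - u y| ^ p) /
        (ENNReal.ofReal (dist x y ^ (θ * p)) * ν (ball x (dist x y)))) ≤ const := by
    intro y hy
    have hlt : a < dist x y := by
      have := hy.2
      rw [mem_closedBall, not_le, dist_comm] at this
      exact this
    have hle : dist x y ≤ 2*a := by
      have := hy.1
      rwa [mem_closedBall, dist_comm] at this
    have hne : x ≠ y := fun h => absurd hlt (by simp [h]; linarith)
    rw [if_neg hne]
    refine ENNReal.div_le_div (ENNReal.ofReal_le_ofReal (hnum y hle)) ?_
    exact mul_le_mul' (ENNReal.ofReal_le_ofReal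
      (Real.rpow_le_rpow ha.le hlt.le hθp)) (measure_mono (ball_subset_ball hlt.le))
  calc ∫⁻ y in closedBall x (2*a) \ closedBall x a, _ ∂ν
      ≤ ∫⁻ _y in closedBall x (2*a) \ closedBall x a, const ∂ν :=
        setLIntegral_mono' hann hpt
    _ = const * ν (closedBall x (2*a) \ closedBall x a) := setLIntegral_const _ _
    _ ≤ const * ((ENNReal.ofReal Cν)^2 * m) := by
        refine mul_le_mul_right ?_ _
        calc ν (closedBall x (2*a) \ closedBall x a) ≤ ν (ball x (2^2 * a)) := by
              refine measure_mono (fun y hy => ?_)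
              have := hy.1
              rw [mem_closedBall] at this
              rw [mem_ball]
              calc dist y x ≤ 2*a := this
                _ < 2^2 * a := by linarith
          _ ≤ (ENNReal.ofReal Cν)^2 * m := doubling_pow hd 2 x ha
    _ = (ENNReal.ofReal Cν)^2 * (ENNReal.ofReal N / ENNReal.ofReal (a ^ (θ * p))) := by
        rw [hconst, ennreal_cancel_s8 hm0.ne' hmt.ne]

open Classical in
/-- The integrand of the Besov point energy. -/
noncomputable def bint {Y : Type*} [MetricSpace Y] [MeasurableSpace Y]
    (ν : Measure Y) (θ p : ℝ) (u : Y → ℝ) (x : Y) (y : Y) : ℝ≥0∞ :=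
  if x = y then 0 else
    ENNReal.ofReal (|u x - u y| ^ p) /
      (ENNReal.ofReal (dist x y ^ (θ * p)) * ν (ball x (dist x y)))

lemma besovPointEnergy_eq {ν : Measure Y} (θ p : ℝ) (u : Y → ℝ) (x : Y) :
    besovPointEnergy ν θ p u x = ∫⁻ y, bint ν θ p u x y ∂ν := rfl

lemma rpow_two_four : (2:ℝ) ^ (2:ℝ) = 4 := by
  have : (2:ℝ) ^ (2:ℝ) = (2:ℝ) ^ (2:ℕ) := by
    rw [← Real.rpow_natCast (2:ℝ) 2]; norm_num
  rw [this]; norm_num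

lemma near_term_eq {θ p ρ : ℝ} (hθp : 0 ≤ θ * p) (hp : 0 ≤ p) (hρ : 0 < ρ) (j : ℕ) :
    ENNReal.ofReal ((4 / 2^j : ℝ) ^ p) / ENNReal.ofReal ((ρ / 2^(j+1)) ^ (θ*p))
      = (ENNReal.ofReal ((2:ℝ)^(2*p + θ*p)) / ENNReal.ofReal (ρ ^ (θ*p))) * besovQ1 θ p ^ j := by
  have h2j : (0:ℝ) < 2^j := by positivity
  have hρθ : (0:ℝ) < ρ ^ (θ*p) := Real.rpow_pos_of_pos hρ _
  have hden : (0:ℝ) < (ρ / 2^(j+1)) ^ (θ*p) := Real.rpow_pos_of_pos (by positivity) _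
  rw [besovQ1, ← ENNReal.ofReal_pow (by positivity), ← ENNReal.ofReal_div_of_pos hden,
    ← ENNReal.ofReal_div_of_pos hρθ, ← ENNReal.ofReal_mul (by positivity)]
  congr 1
  have hnumr : (4 / 2^j : ℝ) = (2:ℝ) ^ ((2:ℝ) - (j:ℝ)) := by
    rw [Real.rpow_sub two_pos, rpow_two_four, Real.rpow_natCast]
  have e1 : (4 / 2^j : ℝ) ^ p = (2:ℝ) ^ (((2:ℝ) - (j:ℝ)) * p) := by
    rw [hnumr, Real.rpow_mul (by norm_num : (0:ℝ) ≤ 2)]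
  have e2 : ((ρ / 2^(j+1)) : ℝ) ^ (θ*p) = ρ^(θ*p) / (2:ℝ) ^ ((((j:ℝ)+1)) * (θ*p)) := by
    rw [Real.div_rpow hρ.le (by positivity), ← Real.rpow_natCast (2:ℝ) (j+1),
      ← Real.rpow_mul (by norm_num : (0:ℝ) ≤ 2)]
    push_cast
    ring_nf
  have e3 : ((2:ℝ) ^ (-(p - θ*p))) ^ j = (2:ℝ) ^ (-(p - θ*p) * (j:ℝ)) := by
    rw [← Real.rpow_natCast ((2:ℝ) ^ (-(p - θ*p))) j,
      ← Real.rpow_mul (by norm_num : (0:ℝ) ≤ 2)]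
  rw [e1, e2, e3, div_div_eq_mul_div, ← Real.rpow_add two_pos, div_mul_eq_mul_div,
    ← Real.rpow_add two_pos]
  congr 1
  ring

lemma far_term_eq {θ p ρ : ℝ} (hθp : 0 ≤ θ * p) (hρ : 0 < ρ) (j : ℕ) :
    ENNReal.ofReal (1:ℝ) / ENNReal.ofReal ((ρ * 2^j) ^ (θ*p))
      = ((1:ℝ≥0∞) / ENNReal.ofReal (ρ ^ (θ*p))) * besovQ2 θ p ^ j := by
  have h2j : (0:ℝ) < 2^j := by positivity
  have hρθ : (0:ℝ) < ρ ^ (θ*p) := Real.rpow_pos_of_pos hρ _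
  have hden : (0:ℝ) < (ρ * 2^j) ^ (θ*p) := Real.rpow_pos_of_pos (by positivity) _
  rw [besovQ2, ← ENNReal.ofReal_pow (by positivity), ← ENNReal.ofReal_div_of_pos hden,
    show (1:ℝ≥0∞) = ENNReal.ofReal (1:ℝ) by simp, ← ENNReal.ofReal_div_of_pos hρθ,
    ← ENNReal.ofReal_mul (by positivity)]
  congr 1
  have e2 : ((ρ * 2^j) : ℝ) ^ (θ*p) = ρ^(θ*p) * (2:ℝ) ^ ((j:ℝ) * (θ*p)) := by
    rw [Real.mul_rpow hρ.le (by positivity), ← Real.rpow_natCast (2:ℝ) j,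
      ← Real.rpow_mul (by norm_num : (0:ℝ) ≤ 2)]
  have e3 : ((2:ℝ) ^ (-(θ*p))) ^ j = (2:ℝ) ^ (-(θ*p) * (j:ℝ)) := by
    rw [← Real.rpow_natCast ((2:ℝ) ^ (-(θ*p))) j,
      ← Real.rpow_mul (by norm_num : (0:ℝ) ≤ 2)]
  have horder : -(θ*p) * (j:ℝ) = -((j:ℝ) * (θ*p)) := by ring
  rw [e2, e3, horder, Real.rpow_neg (by norm_num : (0:ℝ) ≤ 2)]
  have h2 : ((2:ℝ) ^ ((j:ℝ) * (θ*p))) ≠ 0 := (Real.rpow_pos_of_pos two_pos _).ne'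
  field_simp

lemma point_bound_inner [OpensMeasurableSpace Y] {ν : Measure Y} {Cν θ p : ℝ}
    (hd : IsDoublingWith ν Cν) (hpf : BallsPosFinite ν)
    (hθ0 : 0 < θ) (hθ1 : θ < 1) (hp : 1 ≤ p)
    {ρ : ℝ} (hρ : 0 < ρ) {u : Y → ℝ}
    (h01 : ∀ z, 0 ≤ u z ∧ u z ≤ 1)
    (hLip : ∀ a b : Y, |u a - u b| ≤ 4 / ρ * dist a b)
    (x : Y) :
    besovPointEnergy ν θ p u x ≤ besovKin θ p Cν / ENNReal.ofReal (ρ ^ (θ * p)) := by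
  classical
  have hθp : 0 < θ * p := by nlinarith
  have hp0 : (0:ℝ) < p := by linarith
  set c : ℝ≥0∞ := ENNReal.ofReal Cν with hc
  set D : ℝ≥0∞ := ENNReal.ofReal (ρ ^ (θ * p)) with hD
  set A : ℕ → Set Y := fun j => closedBall x (2*(ρ/2^(j+1))) \ closedBall x (ρ/2^(j+1)) with hA
  set B : ℕ → Set Y := fun j => closedBall x (2*(ρ*2^j)) \ closedBall x (ρ*2^j) with hB
  have hAm : ∀ j, MeasurableSet (A j) :=
    fun j => measurableSet_closedBall.diff measurableSet_closedBall
  have hBm : ∀ j, MeasurableSet (B j) :=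
    fun j => measurableSet_closedBall.diff measurableSet_closedBall
  set U : Set Y := (⋃ j, A j) ∪ ⋃ j, B j with hU
  have hUm : MeasurableSet U :=
    (MeasurableSet.iUnion hAm).union (MeasurableSet.iUnion hBm)
  -- everything outside U is the diagonal
  have hcover : ∀ y : Y, y ∉ U → bint ν θ p u x y = 0 := by
    intro y hy
    by_cases hxy : x = y
    · simp [bint, hxy]
    · exfalso
      apply hy
      have hdy : 0 < dist x y := dist_pos.2 hxy
      rcases le_or_gt (dist x y) ρ with hcase | hcase
      · -- near: find minimal j with ρ/2^(j+1) < dist x y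
        have hex : ∃ j : ℕ, ρ / 2^(j+1) < dist x y := by
          obtain ⟨k, hk⟩ := pow_unbounded_of_one_lt (ρ / dist x y) (one_lt_two (α := ℝ))
          refine ⟨k, ?_⟩
          rw [div_lt_iff₀ (by positivity)] at hk ⊢
          have h2 : (2:ℝ)^k ≤ 2^(k+1) := pow_le_pow_right₀ (by norm_num) (Nat.le_succ k)
          nlinarith
        set j := Nat.find hex with hj
        have hspec : ρ / 2^(j+1) < dist x y := Nat.find_spec hex
        have hupper : dist x y ≤ ρ / 2^j := by
          rcases Nat.eq_zero_or_pos j with h0 | h0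
          · rw [h0]; simpa using hcase
          · have := Nat.find_min hex (m := j - 1) (by omega)
            push_neg at this
            have hj1 : j - 1 + 1 = j := by omega
            rwa [hj1] at this
        refine Set.mem_union_left _ (Set.mem_iUnion.2 ⟨j, ?_, ?_⟩)
        · rw [mem_closedBall, dist_comm]
          have : 2*(ρ/2^(j+1)) = ρ/2^j := by
            rw [pow_succ]; field_simp
          rw [this]; exact hupper
        · rw [mem_closedBall, dist_comm, not_le]; exact hspec
      · -- far: find minimal j with dist x y ≤ ρ * 2^(j+1)
        have hex : ∃ j : ℕ, dist x y ≤ ρ * 2^(j+1) := by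
          obtain ⟨k, hk⟩ := pow_unbounded_of_one_lt (dist x y / ρ) (one_lt_two (α := ℝ))
          refine ⟨k, ?_⟩
          rw [div_lt_iff₀ hρ] at hk
          have : (2:ℝ)^k ≤ 2^(k+1) := by
            apply pow_le_pow_right₀ (by norm_num) (Nat.le_succ k)
          nlinarith
        set j := Nat.find hex with hj
        have hspec : dist x y ≤ ρ * 2^(j+1) := Nat.find_spec hex
        have hlower : ρ * 2^j < dist x y := by
          rcases Nat.eq_zero_or_pos j with h0 | h0
          · rw [h0]; simpa using hcase
          · have := Nat.find_min hex (m := j - 1) (by omega)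
            push_neg at this
            have hj1 : j - 1 + 1 = j := by omega
            rwa [hj1] at this
        refine Set.mem_union_right _ (Set.mem_iUnion.2 ⟨j, ?_, ?_⟩)
        · rw [mem_closedBall, dist_comm]
          have : 2*(ρ*2^j) = ρ*2^(j+1) := by ring
          rw [this]; exact hspec
        · rw [mem_closedBall, dist_comm, not_le]; exact hlower
  -- split the integral
  rw [besovPointEnergy_eq]
  have hsplit : ∫⁻ y, bint ν θ p u x y ∂ν
      = ∫⁻ y in U, bint ν θ p u x y ∂ν + ∫⁻ y in Uᶜ, bint ν θ p u x y ∂ν := by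
    have h := lintegral_add_measure (fun y => bint ν θ p u x y) (ν.restrict U) (ν.restrict Uᶜ)
    rw [Measure.restrict_add_restrict_compl hUm] at h
    exact h
  have hzero : ∫⁻ y in Uᶜ, bint ν θ p u x y ∂ν = 0 := by
    have h := setLIntegral_mono' (μ := ν) (g := fun _ => 0) hUm.compl
      (fun y hy => le_of_eq (hcover y hy))
    simpa using h
  have hUsplit : ∫⁻ y in U, bint ν θ p u x y ∂ν
      ≤ (∑' j, ∫⁻ y in A j, bint ν θ p u x y ∂ν)
        + ∑' j, ∫⁻ y in B j, bint ν θ p u x y ∂ν := by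
    calc ∫⁻ y in U, bint ν θ p u x y ∂ν
        ≤ ∫⁻ y in ⋃ j, A j, bint ν θ p u x y ∂ν
          + ∫⁻ y in ⋃ j, B j, bint ν θ p u x y ∂ν := by
          rw [← lintegral_add_measure]
          exact lintegral_mono' (Measure.restrict_union_le _ _) le_rfl
      _ ≤ _ := add_le_add (lintegral_iUnion_le _ _) (lintegral_iUnion_le _ _)
  -- near annuli
  have hnear : ∀ j : ℕ, ∫⁻ y in A j, bint ν θ p u x y ∂ν
      ≤ (c^2 * (ENNReal.ofReal ((2:ℝ)^(2*p + θ*p)) / D)) * besovQ1 θ p ^ j := by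
    intro j
    have haj : (0:ℝ) < ρ/2^(j+1) := by positivity
    have hnum : ∀ y : Y, dist x y ≤ 2 * (ρ/2^(j+1)) → |u x - u y| ^ p ≤ ((4 / 2^j : ℝ)) ^ p := by
      intro y hy
      have h2 : 2*(ρ/2^(j+1)) = ρ/2^j := by
        rw [pow_succ]; field_simp
      refine Real.rpow_le_rpow (abs_nonneg _) ?_ hp0.le
      calc |u x - u y| ≤ 4 / ρ * dist x y := hLip x y
        _ ≤ 4 / ρ * (ρ/2^j) := by
            have h4 : (0:ℝ) < 4/ρ := by positivity
            have := hy
            rw [h2] at this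
            nlinarith
        _ = 4 / 2^j := by field_simp
    have h := lintegral_annulus_le hd hpf hθp.le x haj hnum (θ := θ) (u := u)
    calc ∫⁻ y in A j, bint ν θ p u x y ∂ν
        ≤ c^2 * (ENNReal.ofReal ((4 / 2^j : ℝ) ^ p) / ENNReal.ofReal ((ρ/2^(j+1)) ^ (θ * p))) := h
      _ = (c^2 * (ENNReal.ofReal ((2:ℝ)^(2*p + θ*p)) / D)) * besovQ1 θ p ^ j := by
          rw [near_term_eq hθp.le hp0.le hρ j, hD]; ring
  -- far annuli
  have hfar : ∀ j : ℕ, ∫⁻ y in B j, bint ν θ p u x y ∂ν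
      ≤ (c^2 * (1 / D)) * besovQ2 θ p ^ j := by
    intro j
    have haj : (0:ℝ) < ρ*2^j := by positivity
    have hnum : ∀ y : Y, dist x y ≤ 2 * (ρ*2^j) → |u x - u y| ^ p ≤ (1:ℝ) := by
      intro y _
      refine Real.rpow_le_one (abs_nonneg _) ?_ hp0.le
      have h1 := h01 x
      have h2 := h01 y
      rw [abs_le]; constructor <;> linarith [h1.1, h1.2, h2.1, h2.2]
    have h := lintegral_annulus_le hd hpf hθp.le x haj hnum (θ := θ) (u := u)
    calc ∫⁻ y in B j, bint ν θ p u x y ∂ν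
        ≤ c^2 * (ENNReal.ofReal (1:ℝ) / ENNReal.ofReal ((ρ*2^j) ^ (θ * p))) := h
      _ = (c^2 * (1 / D)) * besovQ2 θ p ^ j := by
          rw [far_term_eq hθp.le hρ j, hD]; ring
  calc ∫⁻ y, bint ν θ p u x y ∂ν
      = ∫⁻ y in U, bint ν θ p u x y ∂ν + ∫⁻ y in Uᶜ, bint ν θ p u x y ∂ν := hsplit
    _ = ∫⁻ y in U, bint ν θ p u x y ∂ν := by rw [hzero, add_zero]
    _ ≤ (∑' j, ∫⁻ y in A j, bint ν θ p u x y ∂ν)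
        + ∑' j, ∫⁻ y in B j, bint ν θ p u x y ∂ν := hUsplit
    _ ≤ (∑' j : ℕ, (c^2 * (ENNReal.ofReal ((2:ℝ)^(2*p + θ*p)) / D)) * besovQ1 θ p ^ j)
        + ∑' j : ℕ, (c^2 * (1 / D)) * besovQ2 θ p ^ j :=
        add_le_add (ENNReal.tsum_le_tsum hnear) (ENNReal.tsum_le_tsum hfar)
    _ = (c^2 * (ENNReal.ofReal ((2:ℝ)^(2*p + θ*p)) / D)) * (1 - besovQ1 θ p)⁻¹
        + (c^2 * (1 / D)) * (1 - besovQ2 θ p)⁻¹ := by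
        rw [ENNReal.tsum_mul_left, ENNReal.tsum_mul_left,
          ENNReal.tsum_geometric, ENNReal.tsum_geometric]
    _ = besovKin θ p Cν / D := by
        rw [besovKin, ← hc]
        simp only [div_eq_mul_inv, one_mul]
        ring

lemma point_bound_outer [OpensMeasurableSpace Y] {ν : Measure Y} {Cν θ p : ℝ}
    (hd : IsDoublingWith ν Cν) (hpf : BallsPosFinite ν) (hC : 1 < Cν)
    (hθp : 0 ≤ θ * p) (hp : 1 ≤ p)
    {x₀ : Y} {ρ : ℝ} (hρ : 0 < ρ) {u : Y → ℝ}
    (h01 : ∀ z, 0 ≤ u z ∧ u z ≤ 1)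
    (hsupp : ∀ z, ρ ≤ dist x₀ z → u z = 0)
    {σ : ℝ} (hσ : 2*ρ ≤ σ) {x : Y} (hx1 : σ ≤ dist x₀ x) (hx2 : dist x₀ x < 2*σ) :
    besovPointEnergy ν θ p u x ≤
      (((ENNReal.ofReal Cν)^3 / (ENNReal.ofReal ((σ/2) ^ (θ*p)) * ν (ball x₀ σ)))) *
        ν (ball x₀ ρ) := by
  classical
  set c : ℝ≥0∞ := ENNReal.ofReal Cν with hc
  have hc0 : c ≠ 0 := (ENNReal.ofReal_pos.2 (by linarith)).ne'
  have hct : c ≠ ∞ := ENNReal.ofReal_ne_top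
  have hσ0 : (0:ℝ) < σ := by linarith
  have hux : u x = 0 := hsupp x (by linarith)
  set E : ℝ≥0∞ := ENNReal.ofReal ((σ/2) ^ (θ*p)) with hE
  set m' : ℝ≥0∞ := ν (ball x (σ/2)) with hm'
  obtain ⟨hm'0, hm't⟩ := hpf x (σ/2) (by linarith)
  have hνσ : ν (ball x₀ σ) ≤ c^3 * m' := by
    refine le_trans (measure_mono ?_) (doubling_pow hd 3 x (by linarith : (0:ℝ) < σ/2))
    intro y hy
    rw [mem_ball] at hy ⊢
    calc dist y x ≤ dist y x₀ + dist x₀ x := dist_triangle _ _ _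
      _ < σ + 2*σ := add_lt_add hy hx2
      _ ≤ 2^3 * (σ/2) := by linarith
  set const : ℝ≥0∞ := c^3 / (E * ν (ball x₀ σ)) with hconst
  have hpt : ∀ y : Y, bint ν θ p u x y ≤ (ball x₀ ρ).indicator (fun _ => const) y := by
    intro y
    by_cases hy : y ∈ ball x₀ ρ
    · rw [Set.indicator_of_mem hy]
      have hdy : dist x₀ y < ρ := by rw [mem_ball, dist_comm] at hy; exact hy
      have hne : x ≠ y := by
        intro h; rw [← h] at hdy; linarith
      have hdist : σ/2 ≤ dist x y := by
        have h1 : dist x₀ x ≤ dist x₀ y + dist y x := dist_triangle _ _ _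
        rw [dist_comm y x] at h1
        linarith
      have hnum : ENNReal.ofReal (|u x - u y| ^ p) ≤ 1 := by
        rw [show (1:ℝ≥0∞) = ENNReal.ofReal 1 by simp]
        refine ENNReal.ofReal_le_ofReal (Real.rpow_le_one (abs_nonneg _) ?_ (by linarith))
        have h1 := h01 y
        rw [hux, abs_le]; constructor <;> [linarith [h1.2]; linarith [h1.1]]
      have hbd : bint ν θ p u x y ≤ 1 / (E * m') := by
        rw [bint, if_neg hne]
        refine ENNReal.div_le_div hnum (mul_le_mul' ?_ ?_)
        · exact ENNReal.ofReal_le_ofReal (Real.rpow_le_rpow (by linarith) hdist hθp)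
        · exact measure_mono (ball_subset_ball hdist)
      refine hbd.trans ?_
      have hkey : (1:ℝ≥0∞) / (E * m') = c^3 / (c^3 * (E * m')) := by
        rw [← ENNReal.mul_div_mul_left 1 (E * m') (pow_ne_zero 3 hc0)
          (ENNReal.pow_ne_top hct), mul_one]
      rw [hconst, hkey]
      refine ENNReal.div_le_div le_rfl ?_
      calc E * ν (ball x₀ σ) ≤ E * (c^3 * m') := mul_le_mul_right hνσ E
        _ = c^3 * (E * m') := by ring
    · rw [Set.indicator_of_notMem hy]
      have hyρ : ρ ≤ dist x₀ y := by
        rw [mem_ball, dist_comm, not_lt] at hy; exact hy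
      have huy : u y = 0 := hsupp y hyρ
      by_cases hxy : x = y
      · simp [bint, hxy]
      · rw [bint, if_neg hxy, hux, huy]
        simp [Real.zero_rpow (by positivity : p ≠ 0), ENNReal.zero_div]
  calc besovPointEnergy ν θ p u x = ∫⁻ y, bint ν θ p u x y ∂ν := besovPointEnergy_eq _ _ _ _
    _ ≤ ∫⁻ y, (ball x₀ ρ).indicator (fun _ => const) y ∂ν := lintegral_mono hpt
    _ = const * ν (ball x₀ ρ) := lintegral_indicator_const measurableSet_ball const

lemma energy_bound [OpensMeasurableSpace Y] {ν : Measure Y} {Cν θ p : ℝ}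
    (hd : IsDoublingWith ν Cν) (hpf : BallsPosFinite ν) (hC : 1 < Cν)
    (hθ0 : 0 < θ) (hθ1 : θ < 1) (hp : 1 ≤ p)
    (x₀ : Y) {ρ : ℝ} (hρ : 0 < ρ) {u : Y → ℝ}
    (h01 : ∀ z, 0 ≤ u z ∧ u z ≤ 1)
    (hLip : ∀ a b : Y, |u a - u b| ≤ 4 / ρ * dist a b)
    (hsupp : ∀ z, ρ ≤ dist x₀ z → u z = 0) :
    besovEnergy ν θ p u ≤ besovKtot θ p Cν * (ν (ball x₀ ρ) / ENNReal.ofReal (ρ ^ (θ*p))) := by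
  classical
  have hθp : 0 < θ * p := by nlinarith
  set c : ℝ≥0∞ := ENNReal.ofReal Cν with hc
  set D : ℝ≥0∞ := ENNReal.ofReal (ρ ^ (θ * p)) with hD
  set P : Y → ℝ≥0∞ := besovPointEnergy ν θ p u with hP
  set W : ℕ → Set Y := fun j => ball x₀ (2*(ρ*2^(j+1))) \ ball x₀ (ρ*2^(j+1)) with hW
  have hWm : ∀ j, MeasurableSet (W j) := fun j => measurableSet_ball.diff measurableSet_ball
  have hBmeas : MeasurableSet (ball x₀ (2*ρ)) := measurableSet_ball
  -- split
  have hsplit : besovEnergy ν θ p u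
      = ∫⁻ x in ball x₀ (2*ρ), P x ∂ν + ∫⁻ x in (ball x₀ (2*ρ))ᶜ, P x ∂ν := by
    rw [besovEnergy]
    have h := lintegral_add_measure P (ν.restrict (ball x₀ (2*ρ)))
      (ν.restrict (ball x₀ (2*ρ))ᶜ)
    rw [Measure.restrict_add_restrict_compl hBmeas] at h
    exact h
  -- near part
  have hnear : ∫⁻ x in ball x₀ (2*ρ), P x ∂ν
      ≤ (besovKin θ p Cν / D) * (c * ν (ball x₀ ρ)) := by
    calc ∫⁻ x in ball x₀ (2*ρ), P x ∂ν
        ≤ ∫⁻ _x in ball x₀ (2*ρ), (besovKin θ p Cν / D) ∂ν :=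
          setLIntegral_mono' hBmeas fun x _ =>
            point_bound_inner hd hpf hθ0 hθ1 hp hρ h01 hLip x
      _ = (besovKin θ p Cν / D) * ν (ball x₀ (2*ρ)) := setLIntegral_const _ _
      _ ≤ (besovKin θ p Cν / D) * (c * ν (ball x₀ ρ)) := by
          refine mul_le_mul_right ?_ _
          have h := doubling_pow hd 1 x₀ hρ
          rw [pow_one, pow_one] at h
          exact le_trans (measure_mono (ball_subset_ball (by linarith))) h
  -- far part
  have hcov : (ball x₀ (2*ρ))ᶜ ⊆ ⋃ j, W j := by
    intro x hx
    rw [Set.mem_compl_iff, mem_ball, dist_comm, not_lt] at hx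
    have hex : ∃ j : ℕ, dist x₀ x < 2*(ρ*2^(j+1)) := by
      obtain ⟨k, hk⟩ := pow_unbounded_of_one_lt (dist x₀ x / ρ) (one_lt_two (α := ℝ))
      refine ⟨k, ?_⟩
      rw [div_lt_iff₀ hρ] at hk
      have h2 : (2:ℝ)^k ≤ 2^(k+1) := pow_le_pow_right₀ (by norm_num) (Nat.le_succ k)
      nlinarith
    set j := Nat.find hex with hj
    have hspec : dist x₀ x < 2*(ρ*2^(j+1)) := Nat.find_spec hex
    have hlower : ρ*2^(j+1) ≤ dist x₀ x := by
      rcases Nat.eq_zero_or_pos j with h0 | h0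
      · rw [h0]
        have : ρ * 2 ^ (0+1) = 2 * ρ := by ring
        rw [this]; exact hx
      · have h := Nat.find_min hex (m := j - 1) (by omega)
        push_neg at h
        have hj1 : j - 1 + 1 = j := by omega
        rw [hj1] at h
        calc ρ*2^(j+1) = 2*(ρ*2^j) := by ring
          _ ≤ dist x₀ x := by
              have : (2:ℝ)*(ρ*2^((j-1)+1)) = 2*(ρ*2^j) := by rw [hj1]
              linarith [this ▸ h]
    exact Set.mem_iUnion.2 ⟨j, by
      rw [Set.mem_diff, mem_ball, mem_ball, dist_comm x x₀]
      exact ⟨hspec, not_lt.2 hlower⟩⟩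
  have hfarj : ∀ j : ℕ, ∫⁻ x in W j, P x ∂ν
      ≤ (c^4 * (ν (ball x₀ ρ) / D)) * besovQ2 θ p ^ j := by
    intro j
    set σ : ℝ := ρ*2^(j+1) with hσdef
    have hσρ : 2*ρ ≤ σ := by
      rw [hσdef]
      have : (2:ℝ) ≤ 2^(j+1) := by
        calc (2:ℝ) = 2^1 := (pow_one 2).symm
          _ ≤ 2^(j+1) := pow_le_pow_right₀ (by norm_num) (by omega)
      nlinarith
    have hσ0 : (0:ℝ) < σ := by linarith
    obtain ⟨hm0, hmt⟩ := hpf x₀ σ hσ0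
    have hptj : ∀ x ∈ W j, P x ≤
        ((c^3 / (ENNReal.ofReal ((σ/2) ^ (θ*p)) * ν (ball x₀ σ)))) * ν (ball x₀ ρ) := by
      intro x hxW
      obtain ⟨hx2, hx1⟩ := hxW
      rw [mem_ball, dist_comm] at hx2
      rw [mem_ball, dist_comm, not_lt] at hx1
      exact point_bound_outer hd hpf hC hθp.le hp hρ h01 hsupp hσρ hx1 (by linarith)
    calc ∫⁻ x in W j, P x ∂ν
        ≤ ∫⁻ _x in W j, ((c^3 / (ENNReal.ofReal ((σ/2) ^ (θ*p)) * ν (ball x₀ σ)))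
            * ν (ball x₀ ρ)) ∂ν := setLIntegral_mono' (hWm j) hptj
      _ = ((c^3 / (ENNReal.ofReal ((σ/2) ^ (θ*p)) * ν (ball x₀ σ))) * ν (ball x₀ ρ))
            * ν (W j) := setLIntegral_const _ _
      _ ≤ ((c^3 / (ENNReal.ofReal ((σ/2) ^ (θ*p)) * ν (ball x₀ σ))) * ν (ball x₀ ρ))
            * (c * ν (ball x₀ σ)) := by
          refine mul_le_mul_right ?_ _
          have h := doubling_pow hd 1 x₀ hσ0
          rw [pow_one, pow_one] at h
          refine le_trans (measure_mono ?_) h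
          intro y hy
          exact ball_subset_ball le_rfl hy.1
      _ = (c * (c^3 / ENNReal.ofReal ((σ/2) ^ (θ*p)))) * ν (ball x₀ ρ) := by
          rw [mul_right_comm, ennreal_cancel_s8 hm0.ne' hmt.ne]
      _ = (c^4 * (ν (ball x₀ ρ) / D)) * besovQ2 θ p ^ j := by
          have hhalf : σ/2 = ρ*2^j := by rw [hσdef, pow_succ]; ring
          rw [hhalf]
          have hfe := far_term_eq (θ := θ) (p := p) hθp.le hρ j
          rw [ENNReal.ofReal_one] at hfe
          calc (c * (c^3 / ENNReal.ofReal ((ρ*2^j) ^ (θ*p)))) * ν (ball x₀ ρ)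
              = (c * (c^3 * (1 / ENNReal.ofReal ((ρ*2^j) ^ (θ*p))))) * ν (ball x₀ ρ) := by
                rw [div_eq_mul_inv, one_div]
            _ = (c^4 * (ν (ball x₀ ρ) / D)) * besovQ2 θ p ^ j := by
                rw [hfe, hD]
                simp only [div_eq_mul_inv, one_mul]
                ring
  have hfar : ∫⁻ x in (ball x₀ (2*ρ))ᶜ, P x ∂ν
      ≤ (c^4 * (ν (ball x₀ ρ) / D)) * (1 - besovQ2 θ p)⁻¹ := by
    calc ∫⁻ x in (ball x₀ (2*ρ))ᶜ, P x ∂ν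
        ≤ ∫⁻ x in ⋃ j, W j, P x ∂ν :=
          lintegral_mono' (Measure.restrict_mono hcov le_rfl) le_rfl
      _ ≤ ∑' j, ∫⁻ x in W j, P x ∂ν := lintegral_iUnion_le _ _
      _ ≤ ∑' j : ℕ, (c^4 * (ν (ball x₀ ρ) / D)) * besovQ2 θ p ^ j :=
          ENNReal.tsum_le_tsum hfarj
      _ = (c^4 * (ν (ball x₀ ρ) / D)) * (1 - besovQ2 θ p)⁻¹ := by
          rw [ENNReal.tsum_mul_left, ENNReal.tsum_geometric]
  calc besovEnergy ν θ p u
      = ∫⁻ x in ball x₀ (2*ρ), P x ∂ν + ∫⁻ x in (ball x₀ (2*ρ))ᶜ, P x ∂ν := hsplit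
    _ ≤ (besovKin θ p Cν / D) * (c * ν (ball x₀ ρ))
        + (c^4 * (ν (ball x₀ ρ) / D)) * (1 - besovQ2 θ p)⁻¹ := add_le_add hnear hfar
    _ = besovKtot θ p Cν * (ν (ball x₀ ρ) / D) := by
        rw [besovKtot, ← hc]
        simp only [div_eq_mul_inv]
        ring

lemma clamp_lip {x₀ : Y} {L c0 : ℝ} (hL : 0 ≤ L) (a b : Y) :
    |min 1 (max (c0 - L * dist x₀ a) 0) - min 1 (max (c0 - L * dist x₀ b) 0)|
      ≤ L * dist a b := by
  have h1 : |min 1 (max (c0 - L * dist x₀ a) 0) - min 1 (max (c0 - L * dist x₀ b) 0)|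
      ≤ |max (c0 - L * dist x₀ a) 0 - max (c0 - L * dist x₀ b) 0| := by
    have h := abs_min_sub_min_le_max (1:ℝ) (max (c0 - L * dist x₀ a) 0)
      (1:ℝ) (max (c0 - L * dist x₀ b) 0)
    simpa using h
  have h2 : |max (c0 - L * dist x₀ a) 0 - max (c0 - L * dist x₀ b) 0|
      ≤ |(c0 - L * dist x₀ a) - (c0 - L * dist x₀ b)| :=
    abs_max_sub_max_le_abs _ _ _
  have h3 : |(c0 - L * dist x₀ a) - (c0 - L * dist x₀ b)| ≤ L * dist a b := by
    have he : (c0 - L * dist x₀ a) - (c0 - L * dist x₀ b) = L * (dist x₀ b - dist x₀ a) := by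
      ring
    rw [he, abs_mul, abs_of_nonneg hL]
    refine mul_le_mul_of_nonneg_left ?_ hL
    have := abs_dist_sub_le b a x₀
    rw [dist_comm x₀ b, dist_comm x₀ a, dist_comm a b]
    exact this
  exact h1.trans (h2.trans h3)

lemma test_case [OpensMeasurableSpace Y] [CompleteSpace Y] {ν : Measure Y} {Cν θ p : ℝ}
    (hd : IsDoublingWith ν Cν) (hpf : BallsPosFinite ν) (hC : 1 < Cν)
    (hθ0 : 0 < θ) (hθ1 : θ < 1) (hp : 1 ≤ p)
    (x₀ : Y) {r R L : ℝ} (hr : 0 < r) (hR : 2*r ≤ R) (hL : 0 < L)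
    (hG : ball x₀ r ⊆ ball x₀ (2/L))
    (hsupΩ : 3/L < R) :
    besovCondCap ν θ p (ball x₀ r) (ball x₀ R) ≤
      besovKtot θ p Cν * (ν (ball x₀ (4/L)) / ENNReal.ofReal ((4/L) ^ (θ*p))) := by
  set u : Y → ℝ := fun z => min 1 (max (3 - L * dist x₀ z) 0) with hu
  have h01 : ∀ z, 0 ≤ u z ∧ u z ≤ 1 := fun z =>
    ⟨le_min zero_le_one (le_max_right _ _), min_le_left _ _⟩
  have hρ : (0:ℝ) < 4/L := by positivity
  have hLip : ∀ a b : Y, |u a - u b| ≤ 4 / (4/L) * dist a b := by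
    intro a b
    have h44 : 4 / (4/L) = L := by field_simp
    rw [h44]
    exact clamp_lip hL.le a b
  have hsupp : ∀ z, 4/L ≤ dist x₀ z → u z = 0 := by
    intro z hz
    have h4 : 4 ≤ L * dist x₀ z := by
      rw [div_le_iff₀ hL] at hz; nlinarith
    have hmax : max (3 - L * dist x₀ z) 0 = 0 := max_eq_right (by linarith)
    rw [hu]; simp only; rw [hmax]
    simp
  have hss : Function.support u ⊆ closedBall x₀ (3/L) := by
    intro z hz
    rw [Function.mem_support] at hz
    rw [mem_closedBall, dist_comm]
    by_contra hcon
    push_neg at hcon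
    rw [div_lt_iff₀ hL] at hcon
    have hmax : max (3 - L * dist x₀ z) 0 = 0 := max_eq_right (by nlinarith)
    apply hz
    rw [hu]; simp only; rw [hmax]; simp
  have hts : tsupport u ⊆ closedBall x₀ (3/L) := closure_minimal hss Metric.isClosed_closedBall
  have hadm : condAdmissible (ball x₀ r) (ball x₀ R) u := by
    refine ⟨h01, ⟨ball x₀ (2/L), isOpen_ball, hG, ?_⟩, ?_, ?_⟩
    · intro z hz
      rw [mem_ball, dist_comm] at hz
      have h2 : L * dist x₀ z < 2 := by
        rw [lt_div_iff₀ hL] at hz; nlinarith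
      have h1 : (1:ℝ) ≤ 3 - L * dist x₀ z := by linarith
      have h0 : (0:ℝ) ≤ 3 - L * dist x₀ z := by linarith
      rw [hu]; simp only; rw [max_eq_left h0, min_eq_left h1]
    · exact IsCompact.of_isClosed_subset
        (compact_closedBall_of_doubling hd hpf x₀ (by positivity : (0:ℝ) < 3/L))
        (isClosed_tsupport u) hts
    · exact hts.trans (closedBall_subset_ball hsupΩ)
  calc besovCondCap ν θ p (ball x₀ r) (ball x₀ R) ≤ besovEnergy ν θ p u :=
        iInf_le_of_le u (iInf_le _ hadm)
    _ ≤ besovKtot θ p Cν * (ν (ball x₀ (4/L)) / ENNReal.ofReal ((4/L) ^ (θ*p))) :=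
        energy_bound hd hpf hC hθ0 hθ1 hp x₀ hρ h01 hLip hsupp

end helpers

universe u

theorem stmt8 (θ p Cν : ℝ) (hθ0 : 0 < θ) (hθ1 : θ < 1) (hp : 1 ≤ p) (hC : 1 < Cν) :
    ∃ C : ℝ, 0 < C ∧
      ∀ (Y : Type u) [MetricSpace Y] [MeasurableSpace Y] [BorelSpace Y] [CompleteSpace Y]
        (ν : Measure Y), IsDoublingWith ν Cν → BallsPosFinite ν →
        ∀ (x₀ : Y) (r R : ℝ), 0 < r → 2 * r ≤ R →
          besovCondCap ν θ p (ball x₀ r) (ball x₀ R) ≤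
            ENNReal.ofReal C *
              min (ν (ball x₀ r) / ENNReal.ofReal (r ^ (θ * p)))
                (ν (ball x₀ R) / ENNReal.ofReal (R ^ (θ * p))) := by
  have hθp : 0 < θ * p := by nlinarith
  set K : ℝ≥0∞ := besovKtot θ p Cν * ENNReal.ofReal Cν with hK
  have hKt : K ≠ ∞ := ENNReal.mul_ne_top (besovKtot_ne_top hθ0 hθ1 hp) ENNReal.ofReal_ne_top
  refine ⟨K.toReal + 1, by positivity, ?_⟩
  intro Y _ _ _ _ ν hd hpf x₀ r R hr hrR
  have hR0 : (0:ℝ) < R := by linarith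
  have hc1 : (1:ℝ≥0∞) ≤ ENNReal.ofReal Cν := ENNReal.one_le_ofReal.2 hC.le
  have hofC : K ≤ ENNReal.ofReal (K.toReal + 1) := by
    conv_lhs => rw [← ENNReal.ofReal_toReal hKt]
    exact ENNReal.ofReal_le_ofReal (by linarith [ENNReal.toReal_nonneg (a := K)])
  have hA : besovCondCap ν θ p (ball x₀ r) (ball x₀ R) ≤
      K * (ν (ball x₀ r) / ENNReal.ofReal (r ^ (θ*p))) := by
    have hL : (0:ℝ) < 2/r := by positivity
    have hcap := test_case hd hpf hC hθ0 hθ1 hp x₀ hr hrR hL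
      (by rw [show 2/(2/r) = r by field_simp; try ring])
      (by rw [show 3/(2/r) = 3*r/2 by field_simp; try ring]; linarith)
    rw [show 4/(2/r) = 2*r by field_simp; try ring] at hcap
    refine hcap.trans ?_
    have hb : ν (ball x₀ (2*r)) ≤ ENNReal.ofReal Cν * ν (ball x₀ r) := hd x₀ r hr
    have hpow : ENNReal.ofReal (r ^ (θ*p)) ≤ ENNReal.ofReal ((2*r) ^ (θ*p)) :=
      ENNReal.ofReal_le_ofReal (Real.rpow_le_rpow hr.le (by linarith) hθp.le)
    calc besovKtot θ p Cν * (ν (ball x₀ (2*r)) / ENNReal.ofReal ((2*r) ^ (θ*p)))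
        ≤ besovKtot θ p Cν * ((ENNReal.ofReal Cν * ν (ball x₀ r)) / ENNReal.ofReal (r ^ (θ*p))) :=
          mul_le_mul_right (ENNReal.div_le_div hb hpow) _
      _ = K * (ν (ball x₀ r) / ENNReal.ofReal (r ^ (θ*p))) := by
          rw [hK, mul_div_assoc]; ring
  have hB : besovCondCap ν θ p (ball x₀ r) (ball x₀ R) ≤
      K * (ν (ball x₀ R) / ENNReal.ofReal (R ^ (θ*p))) := by
    have hL : (0:ℝ) < 4/R := by positivity
    have hcap := test_case hd hpf hC hθ0 hθ1 hp x₀ hr hrR hL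
      (by rw [show 2/(4/R) = R/2 by field_simp; try ring]; exact ball_subset_ball (by linarith))
      (by rw [show 3/(4/R) = 3*R/4 by field_simp; try ring]; linarith)
    rw [show 4/(4/R) = R by field_simp; try ring] at hcap
    refine hcap.trans (mul_le_mul_left ?_ _)
    calc besovKtot θ p Cν = besovKtot θ p Cν * 1 := (mul_one _).symm
      _ ≤ K := mul_le_mul_right hc1 _
  rcases min_cases (ν (ball x₀ r) / ENNReal.ofReal (r ^ (θ * p)))
    (ν (ball x₀ R) / ENNReal.ofReal (R ^ (θ * p))) with ⟨hmin, _⟩ | ⟨hmin, _⟩ <;> rw [hmin]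
  · exact hA.trans (mul_le_mul_left hofC _)
  · exact hB.trans (mul_le_mul_left hofC _)
end

section
/- Suppose u = 0 outside a bounded measurable set Ω ⊂ Y and K ⊂ Y \ Ω is a bounded measurable set with ν(K) > 0. Let R = diam K + sup{d(x,y): x ∈ K, y ∈ Ω}. Then for every z ∈ K, ∫_Y |u|^p dν ≤ R^{θp} · ν(B(z,R))/ν(K) · [u]_{θ,p}^p. -/
open MeasureTheory Metric Set ENNReal

theorem stmt9 {Y : Type*} [MetricSpace Y] [MeasurableSpace Y] [BorelSpace Y] [CompleteSpace Y]
    (ν : Measure Y) (θ p : ℝ) (hθ : 0 < θ) (hp : 1 ≤ p) (hballs : BallsPosFinite ν)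
    (Ω K : Set Y) (hΩb : Bornology.IsBounded Ω) (hΩm : MeasurableSet Ω)
    (hKb : Bornology.IsBounded K) (hKm : MeasurableSet K)
    (hKΩ : K ⊆ Ωᶜ) (hνK : 0 < ν K)
    (u : Y → ℝ) (hu : ∀ z ∉ Ω, u z = 0) (R : ℝ)
    (hR : R = Metric.diam K + sSup ((fun q : Y × Y => dist q.1 q.2) '' (K ×ˢ Ω))) :
    ∀ z ∈ K,
      (∫⁻ x, ENNReal.ofReal (|u x| ^ p) ∂ν) ≤
        ENNReal.ofReal (R ^ (θ * p)) * (ν (ball z R) / ν K) * besovEnergy ν θ p u := by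
  classical
  intro z hz
  have hp0 : (0:ℝ) < p := lt_of_lt_of_le one_pos hp
  have hθp : (0:ℝ) < θ * p := mul_pos hθ hp0
  rcases Set.eq_empty_or_nonempty Ω with hΩe | ⟨x0, hx0⟩
  · have hu0 : ∀ x, u x = 0 := fun x => hu x (by simp [hΩe])
    have hA : (∫⁻ x, ENNReal.ofReal (|u x| ^ p) ∂ν) = 0 := by
      simp [hu0, Real.zero_rpow hp0.ne']
    simp [hA]
  · set s : ℝ := sSup ((fun q : Y × Y => dist q.1 q.2) '' (K ×ˢ Ω)) with hs
    obtain ⟨C, hC⟩ := Metric.isBounded_iff.mp (hKb.union hΩb)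
    have hbdd : BddAbove ((fun q : Y × Y => dist q.1 q.2) '' (K ×ˢ Ω)) := by
      refine ⟨C, ?_⟩
      rintro r ⟨⟨a, b⟩, ⟨ha, hb⟩, rfl⟩
      exact hC (Or.inl ha) (Or.inr hb)
    have hds : ∀ y ∈ K, ∀ x ∈ Ω, dist y x ≤ s := fun y hy x hx =>
      le_csSup hbdd ⟨⟨y, x⟩, ⟨hy, hx⟩, rfl⟩
    have hs0 : 0 < s := by
      have hzx0 : z ≠ x0 := fun h => hKΩ hz (h ▸ hx0)
      exact lt_of_lt_of_le (dist_pos.mpr hzx0) (hds z hz x0 hx0)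
    have hR0 : 0 < R := by
      rw [hR]; exact add_pos_of_nonneg_of_pos Metric.diam_nonneg hs0
    set B : ℝ≥0∞ := ENNReal.ofReal (R ^ (θ * p)) * ν (ball z R) with hB
    have hBtop : B ≠ ∞ :=
      ENNReal.mul_ne_top ofReal_ne_top (hballs z R hR0).2.ne
    -- key pointwise bound
    have key : ∀ y ∈ K, ∀ x, ENNReal.ofReal (|u x| ^ p) ≤
        B * (if y = x then 0 else
          ENNReal.ofReal (|u y - u x| ^ p) /
            (ENNReal.ofReal (dist y x ^ (θ * p)) * ν (ball y (dist y x)))) := by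
      intro y hy x
      have huy : u y = 0 := hu y (hKΩ hy)
      by_cases hyx : y = x
      · subst hyx
        simp [huy, Real.zero_rpow hp0.ne']
      · by_cases hux : u x = 0
        · simp [hux, Real.zero_rpow hp0.ne']
        · have hxΩ : x ∈ Ω := by
            by_contra h; exact hux (hu x h)
          have hd0 : 0 < dist y x := dist_pos.mpr hyx
          have hdR : dist y x ≤ R := by
            rw [hR]
            have := hds y hy x hxΩ
            have : dist y x ≤ s := this
            linarith [Metric.diam_nonneg (s := K)]
          set b : ℝ≥0∞ := ENNReal.ofReal (dist y x ^ (θ * p)) * ν (ball y (dist y x)) with hbdef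
          have hb0 : b ≠ 0 := by
            apply mul_ne_zero
            · exact (ENNReal.ofReal_pos.mpr (Real.rpow_pos_of_pos hd0 _)).ne'
            · exact (hballs y (dist y x) hd0).1.ne'
          have hbtop : b ≠ ∞ :=
            ENNReal.mul_ne_top ofReal_ne_top (hballs y (dist y x) hd0).2.ne
          have hball : ball y (dist y x) ⊆ ball z R := by
            intro w hw
            rw [mem_ball] at hw ⊢
            have h1 : dist y z ≤ Metric.diam K := Metric.dist_le_diam_of_mem hKb hy hz
            have h2 : dist y x ≤ s := hds y hy x hxΩ
            calc dist w z ≤ dist w y + dist y z := dist_triangle w y z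
              _ < dist y x + Metric.diam K := by linarith
              _ ≤ R := by rw [hR]; linarith
          have hbB : b ≤ B := by
            apply mul_le_mul'
            · exact ENNReal.ofReal_le_ofReal
                (Real.rpow_le_rpow dist_nonneg hdR hθp.le)
            · exact measure_mono hball
          have habs : |u y - u x| = |u x| := by
            rw [huy, zero_sub, abs_neg]
          rw [if_neg hyx, habs]
          calc ENNReal.ofReal (|u x| ^ p)
              = b * (ENNReal.ofReal (|u x| ^ p) / b) :=
                (ENNReal.mul_div_cancel hb0 hbtop).symm
            _ ≤ B * (ENNReal.ofReal (|u x| ^ p) / b) := mul_le_mul_left hbB _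
    -- integrate over x
    have hpt : ∀ y ∈ K, (∫⁻ x, ENNReal.ofReal (|u x| ^ p) ∂ν) ≤
        B * besovPointEnergy ν θ p u y := by
      intro y hy
      calc (∫⁻ x, ENNReal.ofReal (|u x| ^ p) ∂ν)
          ≤ ∫⁻ x, B * (if y = x then 0 else
              ENNReal.ofReal (|u y - u x| ^ p) /
                (ENNReal.ofReal (dist y x ^ (θ * p)) * ν (ball y (dist y x)))) ∂ν :=
            lintegral_mono (key y hy)
        _ = B * besovPointEnergy ν θ p u y := by
            rw [besovPointEnergy, ← lintegral_const_mul' _ _ hBtop]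
    set A : ℝ≥0∞ := ∫⁻ x, ENNReal.ofReal (|u x| ^ p) ∂ν with hAdef
    have hνKtop : ν K ≠ ∞ := by
      have hsub : K ⊆ ball z (Metric.diam K + 1) := by
        intro w hw
        rw [mem_ball]
        have := Metric.dist_le_diam_of_mem hKb hw hz
        linarith
      exact ((measure_mono hsub).trans_lt
        (hballs z _ (by linarith [Metric.diam_nonneg (s := K)])).2).ne
    have h1 : A * ν K ≤ B * besovEnergy ν θ p u := by
      calc A * ν K = ∫⁻ _ in K, A ∂ν := (setLIntegral_const K A).symm
        _ ≤ ∫⁻ y in K, B * besovPointEnergy ν θ p u y ∂ν :=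
            setLIntegral_mono' hKm (fun y hy => hpt y hy)
        _ = B * ∫⁻ y in K, besovPointEnergy ν θ p u y ∂ν :=
            lintegral_const_mul' _ _ hBtop
        _ ≤ B * besovEnergy ν θ p u :=
            mul_le_mul_right (setLIntegral_le_lintegral K _) _
    have h2 : A ≤ B * besovEnergy ν θ p u / ν K :=
      (ENNReal.le_div_iff_mul_le (Or.inl hνK.ne') (Or.inl hνKtop)).mpr h1
    calc A ≤ B * besovEnergy ν θ p u / ν K := h2
      _ = ENNReal.ofReal (R ^ (θ * p)) * (ν (ball z R) / ν K) * besovEnergy ν θ p u := by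
          rw [hB, div_eq_mul_inv, div_eq_mul_inv]; ring
end

section
/- Let Y be a compact metric space with doubling measure ν and x_1 a point maximizing d(·, x_0). Form Ŷ = Y ∪ Y' by gluing a disjoint copy Y' of Y at x_1, with metric d̂(x,y) = d(x,x_1) + d'(y,x_1) for x ∈ Y, y ∈ Y', and measure ν̂ = ν + ν'. Then ν̂ is doubling on Ŷ with doubling constant at most 2C_ν, and ν(B^Y(x,r)) ≤ ν̂(B^{Ŷ}(x,r)) ≤ 2ν(B^Y(x,r)) for all x ∈ Y, r > 0. Moreover, if Y is uniformly perfect at x_0 with constant κ, then Ŷ is uniformly perfect at x_0 with constant max{κ, 2}. -/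
open MeasureTheory Metric Set ENNReal

lemma glue_ball_bounds {Y Z : Type*} [MetricSpace Y] [MeasurableSpace Y] [BorelSpace Y]
    [MetricSpace Z] [MeasurableSpace Z] [BorelSpace Z]
    (ν : Measure Y) (x₁ : Y) (j j' : Y → Z) (hj : Isometry j)
    (hjm : Measurable j) (hj'm : Measurable j')
    (hdist : ∀ x y : Y, dist (j x) (j' y) = dist x x₁ + dist y x₁)
    (x : Y) (r : ℝ) :
    ν (ball x r) ≤ (ν.map j + ν.map j') (ball (j x) r) ∧
      (ν.map j + ν.map j') (ball (j x) r) ≤ 2 * ν (ball x r) := by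
  have hpre1 : j ⁻¹' ball (j x) r = ball x r := by
    ext y; simp [mem_ball, hj.dist_eq]
  have hpre2 : j' ⁻¹' ball (j x) r ⊆ ball x r := by
    intro y hy
    simp only [mem_preimage, mem_ball] at hy ⊢
    have h : dist (j' y) (j x) = dist x x₁ + dist y x₁ := by
      rw [dist_comm]; exact hdist x y
    have ht := dist_triangle y x₁ x
    rw [h] at hy
    rw [dist_comm x₁ x] at ht
    linarith
  rw [Measure.add_apply, Measure.map_apply hjm measurableSet_ball,
    Measure.map_apply hj'm measurableSet_ball, hpre1]
  refine ⟨le_add_right le_rfl, ?_⟩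
  have hm : ν (j' ⁻¹' ball (j x) r) ≤ ν (ball x r) := measure_mono hpre2
  calc ν (ball x r) + ν (j' ⁻¹' ball (j x) r)
      ≤ ν (ball x r) + ν (ball x r) := add_le_add_right hm _
    _ = 2 * ν (ball x r) := (two_mul _).symm

theorem stmt15 {Y Z : Type*} [MetricSpace Y] [MeasurableSpace Y] [BorelSpace Y]
    [CompactSpace Y] [MetricSpace Z] [MeasurableSpace Z] [BorelSpace Z]
    (ν : Measure Y) (Cν : ℝ) (hC : 1 < Cν)
    (hdoub : IsDoublingWith ν Cν) (hballs : BallsPosFinite ν)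
    (x₀ x₁ : Y) (hx₁ : ∀ x : Y, dist x x₀ ≤ dist x₁ x₀)
    -- `j` and `j'` embed the two copies of `Y` into the glued space `Z = Ŷ`
    (j j' : Y → Z) (hj : Isometry j) (hj' : Isometry j')
    (hjm : Measurable j) (hj'm : Measurable j')
    (hglue : j x₁ = j' x₁)
    (hcover : Set.range j ∪ Set.range j' = univ)
    (hdist : ∀ x y : Y, dist (j x) (j' y) = dist x x₁ + dist y x₁) :
    -- the glued measure ν̂ = j_*ν + j'_*ν is doubling with constant at most 2 Cν
    (∀ (z : Z) (r : ℝ), 0 < r →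
        (ν.map j + ν.map j') (ball z (2 * r)) ≤
          ENNReal.ofReal (2 * Cν) * (ν.map j + ν.map j') (ball z r)) ∧
    -- comparison of ν̂ with ν on balls centred in the first copy of Y
    (∀ (x : Y) (r : ℝ), 0 < r →
        ν (ball x r) ≤ (ν.map j + ν.map j') (ball (j x) r) ∧
        (ν.map j + ν.map j') (ball (j x) r) ≤ 2 * ν (ball x r)) ∧
    -- uniform perfectness transfers with constant max κ 2
    (∀ κ : ℝ, 1 < κ → UnifPerfectAt x₀ κ → UnifPerfectAt (j x₀) (max κ 2)) := by
  have hdist' : ∀ x y : Y, dist (j' x) (j y) = dist x x₁ + dist y x₁ := by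
    intro a b; rw [dist_comm, hdist b a]; ring
  have h2C : ENNReal.ofReal (2 * Cν) = 2 * ENNReal.ofReal Cν := by
    rw [ENNReal.ofReal_mul (by norm_num)]; norm_num
  refine ⟨?_, ?_, ?_⟩
  · -- doubling
    intro z r hr
    have hz : z ∈ Set.range j ∪ Set.range j' := hcover ▸ mem_univ z
    rcases hz with ⟨y, rfl⟩ | ⟨y, rfl⟩
    · have hb2 := glue_ball_bounds ν x₁ j j' hj hjm hj'm hdist y (2 * r)
      have hb1 := glue_ball_bounds ν x₁ j j' hj hjm hj'm hdist y r
      calc (ν.map j + ν.map j') (ball (j y) (2 * r))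
          ≤ 2 * ν (ball y (2 * r)) := hb2.2
        _ ≤ 2 * (ENNReal.ofReal Cν * ν (ball y r)) :=
            mul_le_mul_right (hdoub y r hr) 2
        _ = ENNReal.ofReal (2 * Cν) * ν (ball y r) := by rw [h2C, mul_assoc]
        _ ≤ ENNReal.ofReal (2 * Cν) * (ν.map j + ν.map j') (ball (j y) r) :=
            mul_le_mul_right hb1.1 _
    · have hcomm : ν.map j + ν.map j' = ν.map j' + ν.map j := add_comm _ _
      rw [hcomm]
      have hb2 := glue_ball_bounds ν x₁ j' j hj' hj'm hjm hdist' y (2 * r)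
      have hb1 := glue_ball_bounds ν x₁ j' j hj' hj'm hjm hdist' y r
      calc (ν.map j' + ν.map j) (ball (j' y) (2 * r))
          ≤ 2 * ν (ball y (2 * r)) := hb2.2
        _ ≤ 2 * (ENNReal.ofReal Cν * ν (ball y r)) :=
            mul_le_mul_right (hdoub y r hr) 2
        _ = ENNReal.ofReal (2 * Cν) * ν (ball y r) := by rw [h2C, mul_assoc]
        _ ≤ ENNReal.ofReal (2 * Cν) * (ν.map j' + ν.map j) (ball (j' y) r) :=
            mul_le_mul_right hb1.1 _
  · -- comparison
    intro x r _
    exact glue_ball_bounds ν x₁ j j' hj hjm hj'm hdist x r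
  · -- uniform perfectness
    intro κ hκ hY r hr hne
    set K := max κ 2 with hK
    have hκK : κ ≤ K := le_max_left _ _
    have h2K : (2 : ℝ) ≤ K := le_max_right _ _
    set R := dist x₁ x₀ with hR
    have hR0 : 0 ≤ R := dist_nonneg
    rcases le_or_gt (K * r) R with hKR | hRK
    · -- K r ≤ R : use uniform perfectness of Y
      have hκr : κ * r ≤ K * r := mul_le_mul_of_nonneg_right hκK hr.le
      have hneY : ball x₀ (κ * r) ≠ univ := by
        intro h
        have : x₁ ∈ ball x₀ (κ * r) := h ▸ mem_univ x₁
        rw [mem_ball] at this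
        linarith
      obtain ⟨y, hy1, hy2⟩ := hY r hr hneY
      rw [mem_ball] at hy1
      refine ⟨j y, ?_, ?_⟩
      · rw [mem_ball, hj.dist_eq]; linarith
      · rw [mem_ball, hj.dist_eq]
        intro h
        exact hy2 (mem_ball.2 h)
    · rcases le_or_gt r R with hrR | hRr
      · -- r ≤ R < K r : use j x₁
        refine ⟨j x₁, ?_, ?_⟩
        · rw [mem_ball, hj.dist_eq]; exact hRK
        · rw [mem_ball, hj.dist_eq]; intro h; linarith
      · rcases le_or_gt r (2 * R) with hr2R | h2Rr
        · -- R < r ≤ 2R : use j' x₀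
          have hd : dist (j' x₀) (j x₀) = 2 * R := by
            rw [hdist' x₀ x₀, dist_comm x₀ x₁]; ring
          refine ⟨j' x₀, ?_, ?_⟩
          · rw [mem_ball, hd]
            nlinarith
          · rw [mem_ball, hd]; intro h; linarith
        · -- 2R < r : the whole space is the ball, contradiction
          exfalso
          apply hne
          ext z
          simp only [mem_univ, iff_true]
          have hz : z ∈ Set.range j ∪ Set.range j' := hcover ▸ mem_univ z
          rcases hz with ⟨y, rfl⟩ | ⟨y, rfl⟩
          · rw [mem_ball, hj.dist_eq]
            have := hx₁ y
            nlinarith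
          · rw [mem_ball, hdist' y x₀]
            have h1 : dist y x₁ ≤ dist y x₀ + dist x₀ x₁ := dist_triangle _ _ _
            have h2 : dist x₀ x₁ = R := dist_comm x₀ x₁
            have h3 := hx₁ y
            nlinarith
end

section
/- Let Y be a metric space with doubling measure ν, x_0 ∈ Y, δ > 0. Define Y_0 = {x_0}, Y_{n+1} = ⋃_{x∈Y_n} B(x, 2^{-n}δ), and Y' = closure(⋃_n Y_n), with ν' = ν restricted to Y'. Then: (1) B(x_0,δ) ⊂ Y' ⊂ closure(B(x_0,2δ)); (2) ν' is doubling on Y' with constant at most C_ν^6; (3) ν'(B^{Y'}(x,r)) ≤ ν(B^Y(x,r)) ≤ C_ν^5 ν'(B^{Y'}(x,r)) for all x ∈ Y' and 0 < r < 2 diam Y'; (4) if Y is uniformly perfect at x_0 with constant κ, then Y' is uniformly perfect at x_0 with constant max{κ,2}. -/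
open MeasureTheory Metric Set ENNReal

/-- The recursively defined sets `Y_0 = {x₀}`, `Y_{n+1} = ⋃_{x ∈ Y_n} B(x, 2^{-n} δ)`. -/
def iterSet {Y : Type*} [MetricSpace Y] (x₀ : Y) (δ : ℝ) : ℕ → Set Y
  | 0 => {x₀}
  | n + 1 => ⋃ x ∈ iterSet x₀ δ n, ball x (δ / 2 ^ n)


section Stmt16Aux
variable {Y : Type*} [MetricSpace Y] {x₀ : Y} {δ : ℝ}

lemma stmt16_iterSet_one : iterSet x₀ δ 1 = ball x₀ δ := by
  simp [iterSet]

lemma stmt16_ball_subset_iterSet_succ {n : ℕ} {y : Y} (hy : y ∈ iterSet x₀ δ n) :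
    ball y (δ / 2 ^ n) ⊆ iterSet x₀ δ (n + 1) := by
  intro w hw
  show w ∈ ⋃ x ∈ iterSet x₀ δ n, ball x (δ / 2 ^ n)
  exact mem_biUnion hy hw

lemma stmt16_iterSet_dist_le (hδ : 0 < δ) : ∀ n, ∀ y ∈ iterSet x₀ δ n,
    dist y x₀ ≤ 2 * δ - 2 * (δ / 2 ^ n)
  | 0, y, hy => by
    rw [iterSet, mem_singleton_iff] at hy
    subst hy; simp
  | n + 1, y, hy => by
    rw [iterSet, mem_iUnion₂] at hy
    obtain ⟨x, hx, hyx⟩ := hy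
    have h1 := stmt16_iterSet_dist_le hδ n x hx
    have h2 : dist y x < δ / 2 ^ n := mem_ball.mp hyx
    have h3 := dist_triangle y x x₀
    have h4 : (δ : ℝ) / 2 ^ (n + 1) = (δ / 2 ^ n) / 2 := by
      rw [pow_succ]; ring
    linarith

lemma stmt16_chain (hδ : 0 < δ) : ∀ n, ∀ y ∈ iterSet x₀ δ n, ∀ s : ℝ, 0 < s → s ≤ δ →
    δ / 2 ^ n ≤ s →
    ∃ z, dist y z ≤ 4 * s - 2 * (δ / 2 ^ n) ∧ ball z (s / 2) ⊆ ⋃ m, iterSet x₀ δ m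
  | 0, y, hy, s, hs, hsδ, hns => by
    rw [iterSet, mem_singleton_iff] at hy
    have h0 : (2:ℝ) ^ (0:ℕ) = 1 := by norm_num
    refine ⟨y, by rw [dist_self]; rw [h0] at hns ⊢; linarith, ?_⟩
    have hsub : ball y (s / 2) ⊆ ball y (δ / 2 ^ 0) := ball_subset_ball (by rw [h0]; linarith)
    have hy0 : y ∈ iterSet x₀ δ 0 := by rw [iterSet, mem_singleton_iff]; exact hy
    exact (hsub.trans (stmt16_ball_subset_iterSet_succ hy0)).trans (subset_iUnion _ 1)
  | n + 1, y, hy, s, hs, hsδ, hns => by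
    rw [iterSet, mem_iUnion₂] at hy
    obtain ⟨x, hx, hyx⟩ := hy
    have h2 : dist y x < δ / 2 ^ n := mem_ball.mp hyx
    have h4 : (δ : ℝ) / 2 ^ (n + 1) = (δ / 2 ^ n) / 2 := by rw [pow_succ]; ring
    by_cases hcase : δ / 2 ^ n ≤ s
    · obtain ⟨z, hz1, hz2⟩ := stmt16_chain hδ n x hx s hs hsδ hcase
      refine ⟨z, ?_, hz2⟩
      have := dist_triangle y x z
      linarith
    · push_neg at hcase
      refine ⟨x, by linarith, ?_⟩
      have hsub : ball x (s / 2) ⊆ ball x (δ / 2 ^ n) := ball_subset_ball (by linarith)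
      exact (hsub.trans (stmt16_ball_subset_iterSet_succ hx)).trans (subset_iUnion _ (n + 1))

lemma stmt16_nearBall (hδ : 0 < δ) (n : ℕ) (y : Y) (hy : y ∈ iterSet x₀ δ n) (s : ℝ)
    (hs : 0 < s) (hsδ : s ≤ δ) :
    ∃ z, dist y z ≤ 4 * s ∧ ball z (s / 2) ⊆ ⋃ m, iterSet x₀ δ m := by
  by_cases hcase : δ / 2 ^ n ≤ s
  · obtain ⟨z, hz1, hz2⟩ := stmt16_chain hδ n y hy s hs hsδ hcase
    have hpos : (0:ℝ) < δ / 2 ^ n := by positivity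
    exact ⟨z, by linarith, hz2⟩
  · push_neg at hcase
    refine ⟨y, by rw [dist_self]; positivity, ?_⟩
    have hsub : ball y (s / 2) ⊆ ball y (δ / 2 ^ n) := ball_subset_ball (by linarith)
    exact (hsub.trans (stmt16_ball_subset_iterSet_succ hy)).trans (subset_iUnion _ (n + 1))

lemma stmt16_annulus_aux {κ r : ℝ} (hδ : 0 < δ) (hr : 0 < r) (hδκ : δ < κ * r) :
    ∀ n, ∀ y ∈ iterSet x₀ δ n, r ≤ dist y x₀ →
      ∃ w ∈ ⋃ m, iterSet x₀ δ m, r ≤ dist w x₀ ∧ dist w x₀ < max κ 2 * r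
  | 0, y, hy, hd => by
    rw [iterSet, mem_singleton_iff] at hy
    rw [hy, dist_self] at hd
    linarith
  | n + 1, y, hy, hd => by
    rw [iterSet, mem_iUnion₂] at hy
    obtain ⟨x, hx, hyx⟩ := hy
    by_cases hc : r ≤ dist x x₀
    · exact stmt16_annulus_aux hδ hr hδκ n x hx hc
    · push_neg at hc
      have hmem : y ∈ ⋃ m, iterSet x₀ δ m := by
        refine mem_iUnion.mpr ⟨n + 1, ?_⟩
        rw [iterSet, mem_iUnion₂]
        exact ⟨x, hx, hyx⟩
      refine ⟨y, hmem, hd, ?_⟩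
      have h2 : dist y x < δ / 2 ^ n := mem_ball.mp hyx
      have h3 := dist_triangle y x x₀
      have hκM : κ ≤ max κ 2 := le_max_left _ _
      have h2M : (2:ℝ) ≤ max κ 2 := le_max_right _ _
      have hκr : κ * r ≤ max κ 2 * r := mul_le_mul_of_nonneg_right hκM hr.le
      have h2r : 2 * r ≤ max κ 2 * r := mul_le_mul_of_nonneg_right h2M hr.le
      cases n with
      | zero =>
        rw [hx] at h2
        norm_num at h2
        linarith
      | succ m =>
        have h2p : (2:ℝ) ≤ 2 ^ (m + 1) := by
          have h := pow_le_pow_right₀ (a := (2:ℝ)) one_le_two (Nat.le_add_left 1 m)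
          simpa using h
        have hp : δ / 2 ^ (m + 1) ≤ δ / 2 := by gcongr
        nlinarith

lemma stmt16_doub_iter {Y : Type*} [MetricSpace Y] [MeasurableSpace Y]
    {ν : Measure Y} {Cν : ℝ}
    (hdoub : ∀ (x : Y) (r : ℝ), 0 < r → ν (ball x (2 * r)) ≤ ENNReal.ofReal Cν * ν (ball x r))
    (z : Y) (t : ℝ) (ht : 0 < t) :
    ∀ m : ℕ, ν (ball z (2 ^ m * t)) ≤ (ENNReal.ofReal Cν) ^ m * ν (ball z t)
  | 0 => by simp
  | m + 1 => by
    have h1 : (2:ℝ) ^ (m + 1) * t = 2 * (2 ^ m * t) := by ring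
    calc ν (ball z (2 ^ (m + 1) * t)) = ν (ball z (2 * (2 ^ m * t))) := by rw [h1]
      _ ≤ ENNReal.ofReal Cν * ν (ball z (2 ^ m * t)) := hdoub z _ (by positivity)
      _ ≤ ENNReal.ofReal Cν * ((ENNReal.ofReal Cν) ^ m * ν (ball z t)) :=
          mul_le_mul_right (stmt16_doub_iter hdoub z t ht m) _
      _ = (ENNReal.ofReal Cν) ^ (m + 1) * ν (ball z t) := by rw [pow_succ]; ring

end Stmt16Aux

theorem stmt16 {Y : Type*} [MetricSpace Y] [MeasurableSpace Y] [BorelSpace Y]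
    (ν : Measure Y) (Cν : ℝ) (hC : 1 < Cν)
    (hdoub : IsDoublingWith ν Cν) (hballs : BallsPosFinite ν)
    (x₀ : Y) (δ : ℝ) (hδ : 0 < δ) :
    -- (1) B(x₀,δ) ⊆ Y' ⊆ closure B(x₀,2δ)
    (ball x₀ δ ⊆ closure (⋃ n, iterSet x₀ δ n) ∧
      closure (⋃ n, iterSet x₀ δ n) ⊆ closure (ball x₀ (2 * δ))) ∧
    -- (2) ν' = ν restricted to Y' is doubling with constant at most Cν^6
    (∀ x ∈ closure (⋃ n, iterSet x₀ δ n), ∀ r : ℝ, 0 < r →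
        ν.restrict (closure (⋃ n, iterSet x₀ δ n)) (ball x (2 * r)) ≤
          ENNReal.ofReal (Cν ^ 6) *
            ν.restrict (closure (⋃ n, iterSet x₀ δ n)) (ball x r)) ∧
    -- (3) ν'(B^{Y'}(x,r)) ≤ ν(B^Y(x,r)) ≤ Cν^5 ν'(B^{Y'}(x,r))
    (∀ x ∈ closure (⋃ n, iterSet x₀ δ n), ∀ r : ℝ, 0 < r →
        r < 2 * Metric.diam (closure (⋃ n, iterSet x₀ δ n)) →
        ν.restrict (closure (⋃ n, iterSet x₀ δ n)) (ball x r) ≤ ν (ball x r) ∧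
        ν (ball x r) ≤ ENNReal.ofReal (Cν ^ 5) *
          ν.restrict (closure (⋃ n, iterSet x₀ δ n)) (ball x r)) ∧
    -- (4) uniform perfectness of Y' at x₀ with constant max κ 2
    (∀ κ : ℝ, 1 < κ → UnifPerfectAt x₀ κ →
      ∀ r : ℝ, 0 < r → ¬ closure (⋃ n, iterSet x₀ δ n) ⊆ ball x₀ (max κ 2 * r) →
        ((ball x₀ (max κ 2 * r) \ ball x₀ r) ∩
          closure (⋃ n, iterSet x₀ δ n)).Nonempty) := by
  set Y' := closure (⋃ n, iterSet x₀ δ n) with hY'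
  have hCpos : (0:ℝ) ≤ Cν := le_of_lt (lt_trans one_pos hC)
  have hUball : (⋃ n, iterSet x₀ δ n) ⊆ ball x₀ (2 * δ) := by
    intro y hy
    rw [mem_iUnion] at hy
    obtain ⟨n, hn⟩ := hy
    have h1 := stmt16_iterSet_dist_le hδ n y hn
    have hpos : (0:ℝ) < δ / 2 ^ n := by positivity
    rw [mem_ball]
    linarith
  have hball1 : ball x₀ δ ⊆ Y' := by
    rw [hY', ← stmt16_iterSet_one (x₀ := x₀) (δ := δ)]
    exact (subset_iUnion _ 1).trans subset_closure
  have hYcball : Y' ⊆ closedBall x₀ (2 * δ) :=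
    (closure_mono hUball).trans closure_ball_subset_closedBall
  have hY'meas : MeasurableSet Y' := isClosed_closure.measurableSet
  -- the key comparison estimate
  have key : ∀ x ∈ Y', ∀ r : ℝ, 0 < r → r ≤ 8 * δ →
      ν (ball x r) ≤ ENNReal.ofReal (Cν ^ 5) * ν.restrict Y' (ball x r) := by
    intro x hx r hr hr8
    obtain ⟨y, hyU, hxy⟩ := Metric.mem_closure_iff.mp hx (r / 16) (by positivity)
    rw [mem_iUnion] at hyU
    obtain ⟨n, hn⟩ := hyU
    obtain ⟨z, hz1, hz2⟩ := stmt16_nearBall hδ n y hn (r / 8) (by positivity) (by linarith)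
    have hxz : dist x z ≤ r / 16 + 4 * (r / 8) := by
      have := dist_triangle x y z
      linarith
    have hsub1 : ball z (r / 8 / 2) ⊆ ball x r := by
      intro w hw
      rw [mem_ball] at hw ⊢
      have h1 := dist_triangle w z x
      rw [dist_comm z x] at h1
      linarith
    have hsub2 : ball x r ⊆ ball z (2 ^ 5 * (r / 8 / 2)) := by
      intro w hw
      rw [mem_ball] at hw ⊢
      have h1 := dist_triangle w x z
      have h32 : (2:ℝ) ^ 5 * (r / 8 / 2) = 2 * r := by ring
      rw [h32]
      linarith
    calc ν (ball x r) ≤ ν (ball z (2 ^ 5 * (r / 8 / 2))) := measure_mono hsub2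
      _ ≤ (ENNReal.ofReal Cν) ^ 5 * ν (ball z (r / 8 / 2)) :=
          stmt16_doub_iter hdoub z _ (by positivity) 5
      _ ≤ ENNReal.ofReal (Cν ^ 5) * ν.restrict Y' (ball x r) := by
          rw [ENNReal.ofReal_pow hCpos]
          refine mul_le_mul_right ?_ _
          rw [Measure.restrict_apply measurableSet_ball]
          exact measure_mono fun w hw => ⟨hsub1 hw, subset_closure (hz2 hw)⟩
  have hdiam : Metric.diam Y' ≤ 4 * δ := by
    have h1 : Metric.diam Y' ≤ Metric.diam (closedBall x₀ (2 * δ)) :=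
      Metric.diam_mono hYcball isBounded_closedBall
    have h2 := Metric.diam_closedBall (x := x₀) (by linarith : (0:ℝ) ≤ 2 * δ)
    linarith
  refine ⟨⟨hball1, closure_mono hUball⟩, ?_, ?_, ?_⟩
  · -- part 2
    intro x hx r hr
    by_cases hr8 : r ≤ 8 * δ
    · calc ν.restrict Y' (ball x (2 * r)) ≤ ν (ball x (2 * r)) :=
            Measure.restrict_apply_le _ _
        _ ≤ ENNReal.ofReal Cν * ν (ball x r) := hdoub x r hr
        _ ≤ ENNReal.ofReal Cν * (ENNReal.ofReal (Cν ^ 5) * ν.restrict Y' (ball x r)) :=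
            mul_le_mul_right (key x hx r hr hr8) _
        _ = ENNReal.ofReal (Cν ^ 6) * ν.restrict Y' (ball x r) := by
            rw [← mul_assoc, ← ENNReal.ofReal_mul hCpos]
            congr 2
            ring
    · push_neg at hr8
      have hsub : Y' ⊆ ball x r := by
        intro y hy
        have h1 : dist y x₀ ≤ 2 * δ := by
          have := hYcball hy; rwa [mem_closedBall] at this
        have h2 : dist x x₀ ≤ 2 * δ := by
          have := hYcball hx; rwa [mem_closedBall] at this
        rw [mem_ball]
        have h3 := dist_triangle y x₀ x
        rw [dist_comm x₀ x] at h3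
        linarith
      have hsub2 : Y' ⊆ ball x (2 * r) := hsub.trans (ball_subset_ball (by linarith))
      rw [Measure.restrict_apply measurableSet_ball, Measure.restrict_apply measurableSet_ball,
        inter_eq_right.mpr hsub2, inter_eq_right.mpr hsub]
      exact le_mul_of_one_le_left zero_le
        (ENNReal.one_le_ofReal.mpr (one_le_pow₀ hC.le))
  · -- part 3
    intro x hx r hr hrd
    refine ⟨Measure.restrict_apply_le _ _, ?_⟩
    exact key x hx r hr (by linarith)
  · -- part 4
    intro κ hκ hup r hr hns
    rw [not_subset] at hns
    obtain ⟨y, hyY, hyb⟩ := hns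
    rw [mem_ball, not_lt] at hyb
    have hκM : κ ≤ max κ 2 := le_max_left _ _
    have h2M : (2:ℝ) ≤ max κ 2 := le_max_right _ _
    have hκr : κ * r ≤ max κ 2 * r := mul_le_mul_of_nonneg_right hκM hr.le
    have h2r : 2 * r ≤ max κ 2 * r := mul_le_mul_of_nonneg_right h2M hr.le
    by_cases hcase : κ * r ≤ δ
    · have hbne : ball x₀ (κ * r) ≠ univ := by
        intro h
        have h1 : y ∈ ball x₀ (κ * r) := h ▸ mem_univ y
        rw [mem_ball] at h1
        linarith
      obtain ⟨w, hw1, hw2⟩ := hup r (by positivity) hbne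
      rw [mem_ball] at hw1
      exact ⟨w, ⟨⟨mem_ball.mpr (lt_of_lt_of_le hw1 hκr), hw2⟩,
        hball1 (mem_ball.mpr (lt_of_lt_of_le hw1 hcase))⟩⟩
    · push_neg at hcase
      obtain ⟨y', hy'U, hyy'⟩ := Metric.mem_closure_iff.mp hyY r hr
      rw [mem_iUnion] at hy'U
      obtain ⟨n, hn⟩ := hy'U
      have hdy' : r ≤ dist y' x₀ := by
        have h1 := dist_triangle y y' x₀
        linarith
      obtain ⟨w, hwU, hw1, hw2⟩ := stmt16_annulus_aux hδ hr hcase n y' hn hdy'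
      exact ⟨w, ⟨⟨mem_ball.mpr hw2, fun hmem => absurd (mem_ball.mp hmem) (not_lt.mpr hw1)⟩,
        subset_closure hwU⟩⟩
end
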